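/- arXiv:1206.1196 — 2 statements merged into one kernel-verified Lean document; each statement's English description precedes it below -/
import Mathlib

section
/- Let G and H be commuting nonabelian subgroups of the group of orientation-preserving C² diffeomorphisms of [0,1). If H is a perfect group, then every element of H acts as the identity on the complement of Fix(G). -/
/-- A model for an orientation-preserving C^r diffeomorphism of the half-open
interval [0,1): a permutation of ℝ that is the identity outside [0,1), restricts to a
C^r monotone bijection of [0,1) with C^r inverse. -/
def IsIcoDiff (r : ℕ∞) (g : Equiv.Perm ℝ) : Prop :=
  ContDiffOn ℝ r ⇑g (Set.Ico 0 1) ∧ ContDiffOn ℝ r ⇑g.symm (Set.Ico 0 1) ∧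
  Set.BijOn ⇑g (Set.Ico 0 1) (Set.Ico 0 1) ∧ StrictMonoOn ⇑g (Set.Ico 0 1) ∧
  ∀ x : ℝ, x ∉ Set.Ico (0:ℝ) 1 → g x = x

theorem Equiv.Perm.apply_inv_self (e : Equiv.Perm ℝ) (x : ℝ) : e (e⁻¹ x) = x :=
  e.apply_symm_apply x

theorem Equiv.Perm.inv_apply_self (e : Equiv.Perm ℝ) (x : ℝ) : e⁻¹ (e x) = x :=
  e.symm_apply_apply x

open scoped commutatorElement

namespace IsIcoDiff
open Set

variable {g h : Equiv.Perm ℝ}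

theorem mem_Ico (hg : IsIcoDiff 2 g) {x : ℝ} (hx : x ∈ Ico (0:ℝ) 1) : g x ∈ Ico (0:ℝ) 1 :=
  hg.2.2.1.mapsTo hx

theorem fix_one (hg : IsIcoDiff 2 g) : g 1 = 1 := hg.2.2.2.2 1 (by simp)

theorem fix_zero (hg : IsIcoDiff 2 g) : g 0 = 0 := by
  have h0 : g 0 ∈ Ico (0:ℝ) 1 := hg.mem_Ico (by norm_num)
  rcases eq_or_lt_of_le h0.1 with h | h
  · exact h.symm
  · exfalso
    obtain ⟨z, hz, hgz⟩ := hg.2.2.1.2.2 (show g 0 / 2 ∈ Ico (0:ℝ) 1 by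
      constructor
      · positivity
      · nlinarith [h0.2])
    have hlt : g z < g 0 := by rw [hgz]; linarith
    have hz0 : z < 0 := by
      by_contra hz0
      push_neg at hz0
      rcases eq_or_lt_of_le hz0 with h2 | h2
      · rw [← h2] at hlt; exact lt_irrefl _ hlt
      · exact absurd (hg.2.2.2.1 (by norm_num : (0:ℝ) ∈ Ico (0:ℝ) 1) hz h2) (by linarith)
    exact absurd hz0 (not_lt.2 hz.1)

theorem strictMono (hg : IsIcoDiff 2 g) : StrictMono ⇑g := by
  intro x y hxy
  rcases lt_or_ge x 0 with hx | hx
  · rw [hg.2.2.2.2 x (fun hmem => absurd hmem.1 (by linarith))]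
    rcases lt_or_ge y 0 with hy | hy
    · rw [hg.2.2.2.2 y (fun hmem => absurd hmem.1 (by linarith))]
      exact hxy
    · rcases lt_or_ge y 1 with hy1 | hy1
      · have h1 := (hg.mem_Ico ⟨hy, hy1⟩).1
        rcases eq_or_lt_of_le hy with h0 | hy0
        · rw [← h0, hg.fix_zero]; exact hx
        · have h2 := hg.2.2.2.1 (by norm_num : (0:ℝ) ∈ Ico (0:ℝ) 1) ⟨hy, hy1⟩ hy0
          rw [hg.fix_zero] at h2; linarith
      · rw [hg.2.2.2.2 y (by simp [hy1])]; linarith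
  · rcases lt_or_ge x 1 with hx1 | hx1
    · have hgx := hg.mem_Ico ⟨hx, hx1⟩
      rcases lt_or_ge y 1 with hy1 | hy1
      · exact hg.2.2.2.1 ⟨hx, hx1⟩ ⟨le_trans hx hxy.le, hy1⟩ hxy
      · rw [hg.2.2.2.2 y (by simp [hy1])]
        exact lt_of_lt_of_le hgx.2 hy1
    · rw [hg.2.2.2.2 x (by simp [hx1]),
        hg.2.2.2.2 y (fun hmem => absurd hmem.2 (by linarith))]
      exact hxy

theorem symm (hg : IsIcoDiff 2 g) : IsIcoDiff 2 g.symm := by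
  refine ⟨hg.2.1, by simpa using hg.1, ?_, ?_, ?_⟩
  · refine ⟨fun x hx => ?_, fun x _ y _ hxy => g.symm.injective hxy, fun x hx => ⟨g x, hg.mem_Ico hx, by simp⟩⟩
    obtain ⟨z, hz, hgz⟩ := hg.2.2.1.2.2 hx
    rw [← hgz]; simpa using hz
  · intro x _ y _ hxy
    by_contra hle
    push_neg at hle
    have h2 := hg.strictMono.monotone hle
    simp only [Equiv.apply_symm_apply] at h2
    linarith
  · intro x hx
    have h1 : g x = x := hg.2.2.2.2 x hx
    conv_lhs => rw [← h1]
    simp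

theorem mul (hg : IsIcoDiff 2 g) (hh : IsIcoDiff 2 h) : IsIcoDiff 2 (g * h) := by
  have hcoe : ⇑(g * h) = ⇑g ∘ ⇑h := rfl
  have hcoe' : ⇑(g * h).symm = ⇑h.symm ∘ ⇑g.symm := rfl
  refine ⟨?_, ?_, ?_, ?_, ?_⟩
  · rw [hcoe]; exact hg.1.comp hh.1 hh.2.2.1.mapsTo
  · rw [hcoe']; exact hh.2.1.comp hg.2.1 hg.symm.2.2.1.mapsTo
  · rw [hcoe]; exact hg.2.2.1.comp hh.2.2.1
  · rw [hcoe]; exact hg.2.2.2.1.comp hh.2.2.2.1 hh.2.2.1.mapsTo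
  · intro x hx
    have h1 : h x = x := hh.2.2.2.2 x hx
    have h2 : g x = x := hg.2.2.2.2 x hx
    show g (h x) = x
    rw [h1, h2]

theorem one : IsIcoDiff 2 (1 : Equiv.Perm ℝ) := by
  refine ⟨contDiffOn_id, contDiffOn_id, ?_, fun x _ y _ h => h, fun x _ => rfl⟩
  exact ⟨fun x hx => hx, fun x _ y _ h => h, fun x hx => ⟨x, hx, rfl⟩⟩

theorem inv (hg : IsIcoDiff 2 g) : IsIcoDiff 2 g⁻¹ := hg.symm

theorem zpow (hg : IsIcoDiff 2 g) (n : ℤ) : IsIcoDiff 2 (g ^ n) := by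
  induction n using Int.induction_on with
  | zero => exact one
  | succ n ih => rw [zpow_add, zpow_one]; exact ih.mul hg
  | pred n ih => rw [zpow_sub, zpow_one]; exact ih.mul hg.inv

theorem pow (hg : IsIcoDiff 2 g) (n : ℕ) : IsIcoDiff 2 (g ^ n) := by
  have := hg.zpow n; rwa [zpow_natCast] at this

theorem continuousOn (hg : IsIcoDiff 2 g) : ContinuousOn ⇑g (Ico 0 1) := hg.1.continuousOn

theorem continuousAt (hg : IsIcoDiff 2 g) {x : ℝ} (hx : x ∈ Ioo (0:ℝ) 1) :
    ContinuousAt ⇑g x :=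
  (hg.continuousOn x (Ioo_subset_Ico_self hx)).continuousAt
    (Filter.mem_of_superset (isOpen_Ioo.mem_nhds hx) Ioo_subset_Ico_self)

end IsIcoDiff

namespace IsIcoDiff
open Set

variable {g h f u v w : Equiv.Perm ℝ}

theorem mem_Ioo (hg : IsIcoDiff 2 g) {x : ℝ} (hx : x ∈ Ioo (0:ℝ) 1) : g x ∈ Ioo (0:ℝ) 1 := by
  refine ⟨?_, (hg.mem_Ico (Ioo_subset_Ico_self hx)).2⟩
  have := hg.strictMono hx.1
  rwa [hg.fix_zero] at this

theorem hasDerivAt (hg : IsIcoDiff 2 g) {x : ℝ} (hx : x ∈ Ioo (0:ℝ) 1) :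
    HasDerivAt ⇑g (deriv ⇑g x) x := by
  have h1 : DifferentiableOn ℝ ⇑g (Ioo 0 1) :=
    (hg.1.differentiableOn (by norm_num)).mono Ioo_subset_Ico_self
  exact (h1.differentiableAt (isOpen_Ioo.mem_nhds hx)).hasDerivAt

theorem deriv_nonneg_of_hasDerivAt {φ : ℝ → ℝ} {x d : ℝ} (hmono : StrictMono φ)
    (hd : HasDerivAt φ d x) : 0 ≤ d := by
  have h1 := hasDerivAt_iff_tendsto_slope.1 hd
  refine ge_of_tendsto h1 ?_
  filter_upwards [self_mem_nhdsWithin] with y hy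
  rcases lt_or_gt_of_ne (show y ≠ x from hy) with h | h
  · rw [slope_def_field]; have := hmono h
    rw [div_nonneg_iff]; right; constructor <;> linarith
  · rw [slope_def_field]; have := hmono h
    rw [div_nonneg_iff]; left; constructor <;> linarith

theorem deriv_pos (hg : IsIcoDiff 2 g) {x : ℝ} (hx : x ∈ Ioo (0:ℝ) 1) : 0 < deriv ⇑g x := by
  have hd := hg.hasDerivAt hx
  have hd' := hg.symm.hasDerivAt (hg.mem_Ioo hx)
  have hcomp : HasDerivAt (⇑g.symm ∘ ⇑g) (deriv ⇑g.symm (g x) * deriv ⇑g x) x := hd'.comp x hd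
  have hid : (⇑g.symm ∘ ⇑g) = id := funext fun z => g.symm_apply_apply z
  rw [hid] at hcomp
  have h1 : deriv ⇑g.symm (g x) * deriv ⇑g x = 1 := hcomp.unique (hasDerivAt_id x)
  have h2 : deriv ⇑g x ≠ 0 := fun h => by rw [h, mul_zero] at h1; norm_num at h1
  exact lt_of_le_of_ne (deriv_nonneg_of_hasDerivAt hg.strictMono hd) (Ne.symm h2)

theorem hasDerivAt_mul (hu : IsIcoDiff 2 u) (hv : IsIcoDiff 2 v) {x : ℝ}
    (hx : x ∈ Ioo (0:ℝ) 1) :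
    HasDerivAt ⇑(u * v) (deriv ⇑u (v x) * deriv ⇑v x) x :=
  (hu.hasDerivAt (hv.mem_Ioo hx)).comp x (hv.hasDerivAt hx)

theorem deriv_mul (hu : IsIcoDiff 2 u) (hv : IsIcoDiff 2 v) {x : ℝ}
    (hx : x ∈ Ioo (0:ℝ) 1) :
    deriv ⇑(u * v) x = deriv ⇑u (v x) * deriv ⇑v x :=
  (hasDerivAt_mul hu hv hx).deriv

theorem mem_Ioo_pow (hf : IsIcoDiff 2 f) (n : ℕ) {x : ℝ} (hx : x ∈ Ioo (0:ℝ) 1) :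
    (f ^ n) x ∈ Ioo (0:ℝ) 1 := (hf.pow n).mem_Ioo hx

theorem deriv_pow_eq (hf : IsIcoDiff 2 f) (n : ℕ) {x : ℝ} (hx : x ∈ Ioo (0:ℝ) 1) :
    deriv ⇑(f ^ n) x = ∏ i ∈ Finset.range n, deriv ⇑f ((f ^ i) x) := by
  induction n with
  | zero =>
    simp only [pow_zero, Finset.range_zero, Finset.prod_empty]
    have : ⇑(1 : Equiv.Perm ℝ) = id := rfl
    rw [this]; exact deriv_id x
  | succ n ih =>
    have h1 : f ^ (n + 1) = f * f ^ n := by rw [pow_succ']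
    rw [h1, deriv_mul hf (hf.pow n) hx, ih, Finset.prod_range_succ, mul_comm]

theorem deriv_comm (hw : IsIcoDiff 2 w) (hf : IsIcoDiff 2 f)
    (hc : w * f = f * w) {x : ℝ} (hx : x ∈ Ioo (0:ℝ) 1) :
    deriv ⇑w (f x) * deriv ⇑f x = deriv ⇑f (w x) * deriv ⇑w x := by
  have h1 := hasDerivAt_mul hw hf hx
  have h2 := hasDerivAt_mul hf hw hx
  rw [hc] at h1
  exact h1.unique h2

end IsIcoDiff

namespace IsIcoDiff
open Set Filter Topology

variable {f g w : Equiv.Perm ℝ}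

theorem maps_Ioo (hf : IsIcoDiff 2 f) {a b : ℝ} (hfa : f a = a)
    (hcontr : ∀ y ∈ Ioo a b, f y < y) {y : ℝ} (hy : y ∈ Ioo a b) : f y ∈ Ioo a b := by
  refine ⟨?_, lt_trans (hcontr y hy) hy.2⟩
  have := hf.strictMono hy.1
  rwa [hfa] at this

theorem inv_maps_Ioo (hf : IsIcoDiff 2 f) {a b : ℝ} (hfb : f b = b)
    (hcontr : ∀ y ∈ Ioo a b, f y < y) {y : ℝ} (hy : y ∈ Ioo a b) :
    f⁻¹ y ∈ Ioo a b ∧ y < f⁻¹ y := by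
  have hfz : f (f⁻¹ y) = y := f.apply_inv_self y
  have h1 : f⁻¹ y < b := by
    by_contra hge
    push_neg at hge
    have := hf.strictMono.monotone hge
    rw [hfz, hfb] at this
    exact absurd hy.2 (not_lt.2 this)
  have h2 : y < f⁻¹ y := by
    by_contra hge
    push_neg at hge
    rcases eq_or_lt_of_le hge with he | hlt
    · have hfyy : f y = y := by conv_lhs => rw [← he, hfz]
      exact absurd (hcontr y hy) (by rw [hfyy]; exact lt_irrefl y)
    · have h4 := hf.strictMono hlt
      rw [hfz] at h4
      exact absurd (hcontr y hy) (not_lt.2 h4.le)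
  exact ⟨⟨lt_trans hy.1 h2, h1⟩, h2⟩

theorem pow_mem_Ioo_contract (hf : IsIcoDiff 2 f) {a b : ℝ} (hfa : f a = a)
    (hcontr : ∀ y ∈ Ioo a b, f y < y) {y : ℝ} (hy : y ∈ Ioo a b) (n : ℕ) :
    (f ^ n) y ∈ Ioo a b := by
  induction n with
  | zero => simpa using hy
  | succ n ih =>
    have : (f ^ (n+1)) y = f ((f ^ n) y) := by
      rw [pow_succ']; rfl
    rw [this]
    exact hf.maps_Ioo hfa hcontr ih

theorem orbit_anti (hf : IsIcoDiff 2 f) {a b : ℝ} (hfa : f a = a)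
    (hcontr : ∀ y ∈ Ioo a b, f y < y) {y : ℝ} (hy : y ∈ Ioo a b) :
    StrictAnti (fun n : ℕ => (f ^ n) y) := by
  apply strictAnti_nat_of_succ_lt
  intro n
  have h1 : (f ^ (n+1)) y = f ((f ^ n) y) := by rw [pow_succ']; rfl
  rw [h1]
  exact hcontr _ (hf.pow_mem_Ioo_contract hfa hcontr hy n)

theorem orbit_tendsto (hf : IsIcoDiff 2 f) {a b : ℝ} (ha : 0 ≤ a) (hb : b ≤ 1)
    (hfa : f a = a) (hcontr : ∀ y ∈ Ioo a b, f y < y) {y : ℝ} (hy : y ∈ Ioo a b) :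
    Tendsto (fun n : ℕ => (f ^ n) y) atTop (𝓝 a) := by
  have hmem := hf.pow_mem_Ioo_contract hfa hcontr hy
  have hanti : Antitone (fun n : ℕ => (f ^ n) y) := (hf.orbit_anti hfa hcontr hy).antitone
  have hbdd : BddBelow (Set.range fun n : ℕ => (f ^ n) y) :=
    ⟨a, by rintro z ⟨n, rfl⟩; exact (hmem n).1.le⟩
  have hlim := tendsto_atTop_ciInf hanti hbdd
  set L := ⨅ n : ℕ, (f ^ n) y with hL
  have hLa : a ≤ L := le_ciInf fun n => (hmem n).1.le
  have hLb : L < b := lt_of_le_of_lt (ciInf_le hbdd 0) (by simpa using hy.2)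
  rcases eq_or_lt_of_le hLa with he | hlt
  · rwa [he]
  · exfalso
    have hL01 : L ∈ Ioo (0:ℝ) 1 := ⟨lt_of_le_of_lt ha hlt, lt_of_lt_of_le hLb hb⟩
    have hcont := hf.continuousAt hL01
    have h2 : Tendsto (fun n : ℕ => f ((f ^ n) y)) atTop (𝓝 (f L)) :=
      (hcont.tendsto).comp hlim
    have h3 : Tendsto (fun n : ℕ => (f ^ (n+1)) y) atTop (𝓝 L) :=
      hlim.comp (tendsto_add_atTop_nat 1)
    have h4 : (fun n : ℕ => f ((f ^ n) y)) = fun n : ℕ => (f ^ (n+1)) y := by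
      funext n; rw [pow_succ']; rfl
    rw [h4] at h2
    have h5 : f L = L := tendsto_nhds_unique h2 h3
    exact absurd (hcontr L ⟨hlt, hLb⟩) (by rw [h5]; exact lt_irrefl L)

theorem inv_pow_mem_Ioo (hf : IsIcoDiff 2 f) {a b : ℝ} (hfb : f b = b)
    (hcontr : ∀ y ∈ Ioo a b, f y < y) {y : ℝ} (hy : y ∈ Ioo a b) (n : ℕ) :
    (f⁻¹ ^ n) y ∈ Ioo a b := by
  induction n with
  | zero => simpa using hy
  | succ n ih =>
    have : (f⁻¹ ^ (n+1)) y = f⁻¹ ((f⁻¹ ^ n) y) := by rw [pow_succ']; rfl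
    rw [this]
    exact (hf.inv_maps_Ioo hfb hcontr ih).1

theorem inv_orbit_tendsto (hf : IsIcoDiff 2 f) {a b : ℝ} (ha : 0 ≤ a) (hb : b ≤ 1)
    (hfb : f b = b) (hcontr : ∀ y ∈ Ioo a b, f y < y) {y : ℝ} (hy : y ∈ Ioo a b) :
    Tendsto (fun n : ℕ => (f⁻¹ ^ n) y) atTop (𝓝 b) := by
  have hmem := hf.inv_pow_mem_Ioo hfb hcontr hy
  have hmono : Monotone (fun n : ℕ => (f⁻¹ ^ n) y) := by
    apply monotone_nat_of_le_succ
    intro n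
    have h1 : (f⁻¹ ^ (n+1)) y = f⁻¹ ((f⁻¹ ^ n) y) := by rw [pow_succ']; rfl
    rw [h1]
    exact (hf.inv_maps_Ioo hfb hcontr (hmem n)).2.le
  have hbdd : BddAbove (Set.range fun n : ℕ => (f⁻¹ ^ n) y) :=
    ⟨b, by rintro z ⟨n, rfl⟩; exact (hmem n).2.le⟩
  have hlim := tendsto_atTop_ciSup hmono hbdd
  set L := ⨆ n : ℕ, (f⁻¹ ^ n) y with hL
  have hLb : L ≤ b := ciSup_le fun n => (hmem n).2.le
  have hLa : a < L := lt_of_lt_of_le hy.1 (by simpa [hL] using le_ciSup hbdd 0)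
  rcases eq_or_lt_of_le hLb with he | hlt
  · rwa [← he]
  · exfalso
    have hL01 : L ∈ Ioo (0:ℝ) 1 := ⟨lt_of_le_of_lt ha hLa, lt_of_lt_of_le hlt hb⟩
    have hcont := hf.continuousAt hL01
    have h2 : Tendsto (fun n : ℕ => f ((f⁻¹ ^ (n+1)) y)) atTop (𝓝 (f L)) :=
      (hcont.tendsto).comp (hlim.comp (tendsto_add_atTop_nat 1))
    have h4 : (fun n : ℕ => f ((f⁻¹ ^ (n+1)) y)) = fun n : ℕ => (f⁻¹ ^ n) y := by
      funext n
      have : (f⁻¹ ^ (n+1)) y = f⁻¹ ((f⁻¹ ^ n) y) := by rw [pow_succ']; rfl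
      rw [this, Equiv.Perm.apply_inv_self]
    rw [h4] at h2
    have h5 : f L = L := tendsto_nhds_unique h2 hlim
    exact absurd (hcontr L ⟨hLa, hlt⟩) (by rw [h5]; exact lt_irrefl L)

end IsIcoDiff

namespace IsIcoDiff
open Set Filter Topology

variable {g : Equiv.Perm ℝ}

theorem derivWithin_ne_zero (hg : IsIcoDiff 2 g) {x : ℝ} (hx : x ∈ Ico (0:ℝ) 1) :
    derivWithin ⇑g (Ico 0 1) x ≠ 0 := by
  have hd : HasDerivWithinAt ⇑g (derivWithin ⇑g (Ico 0 1) x) (Ico 0 1) x :=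
    ((hg.1.differentiableOn (by norm_num)) x hx).hasDerivWithinAt
  have hd' : HasDerivWithinAt ⇑g.symm (derivWithin ⇑g.symm (Ico 0 1) (g x)) (Ico 0 1) (g x) :=
    ((hg.symm.1.differentiableOn (by norm_num)) (g x) (hg.mem_Ico hx)).hasDerivWithinAt
  have hcomp := hd'.comp x hd (hg.2.2.1.mapsTo)
  have hid : (⇑g.symm ∘ ⇑g) = id := funext fun z => g.symm_apply_apply z
  rw [hid] at hcomp
  have h1 := hcomp.derivWithin ((uniqueDiffOn_Ico 0 1) x hx)
  rw [derivWithin_id x _ ((uniqueDiffOn_Ico 0 1) x hx)] at h1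
  intro h0
  rw [h0, mul_zero] at h1
  norm_num at h1

theorem derivWithin_pos (hg : IsIcoDiff 2 g) {x : ℝ} (hx : x ∈ Ico (0:ℝ) 1) :
    0 < derivWithin ⇑g (Ico 0 1) x := by
  rcases lt_or_ge 0 (derivWithin ⇑g (Ico 0 1) x) with h | h
  · exact h
  exfalso
  have hneg : derivWithin ⇑g (Ico 0 1) x < 0 :=
    lt_of_le_of_ne h (hg.derivWithin_ne_zero hx)
  have hhalf : (1/2 : ℝ) ∈ Ico (0:ℝ) 1 := by norm_num
  have hpos : 0 < derivWithin ⇑g (Ico 0 1) (1/2) := by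
    rw [derivWithin_of_mem_nhds (Ico_mem_nhds_iff.2 (by norm_num))]
    exact hg.deriv_pos (by norm_num)
  have hsub : uIcc x (1/2 : ℝ) ⊆ Ico (0:ℝ) 1 := by
    intro z hz
    rw [mem_uIcc] at hz
    rcases hz with ⟨h1, h2⟩ | ⟨h1, h2⟩
    · exact ⟨le_trans hx.1 h1, lt_of_le_of_lt h2 (by norm_num)⟩
    · exact ⟨le_trans (by norm_num) h1, lt_of_le_of_lt h2 hx.2⟩
  have hcont : ContinuousOn (derivWithin ⇑g (Ico 0 1)) (uIcc x (1/2:ℝ)) :=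
    (hg.1.continuousOn_derivWithin (uniqueDiffOn_Ico 0 1) one_le_two).mono hsub
  have hIVT := intermediate_value_uIcc hcont
  have h0mem : (0:ℝ) ∈ uIcc (derivWithin ⇑g (Ico 0 1) x) (derivWithin ⇑g (Ico 0 1) (1/2)) := by
    rw [mem_uIcc]
    left
    exact ⟨hneg.le, hpos.le⟩
  obtain ⟨z, hz, hz0⟩ := hIVT h0mem
  exact hg.derivWithin_ne_zero (hsub hz) hz0

end IsIcoDiff

namespace IsIcoDiff
open Set Filter Topology

theorem zpow_mem_Ioo {f : Equiv.Perm ℝ} (hf : IsIcoDiff 2 f) {a b : ℝ}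
    (hfa : f a = a) (hfb : f b = b) (hcontr : ∀ y ∈ Ioo a b, f y < y)
    {y : ℝ} (hy : y ∈ Ioo a b) : ∀ n : ℤ, (f ^ n) y ∈ Ioo a b := by
  intro n
  induction n using Int.induction_on with
  | zero => simpa using hy
  | succ k ih =>
    have h1 : (f ^ ((k:ℤ)+1)) y = f ((f ^ (k:ℤ)) y) := by
      rw [add_comm, zpow_add, zpow_one]; rfl
    rw [h1]; exact hf.maps_Ioo hfa hcontr ih
  | pred k ih =>
    have h1 : (f ^ (-(k:ℤ)-1)) y = f⁻¹ ((f ^ (-(k:ℤ))) y) := by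
      rw [sub_eq_add_neg, add_comm, zpow_add, zpow_neg_one]; rfl
    rw [h1]; exact (hf.inv_maps_Ioo hfb hcontr ih).1

theorem zpow_succ_lt {f : Equiv.Perm ℝ} (hf : IsIcoDiff 2 f) {a b : ℝ}
    (hfa : f a = a) (hfb : f b = b) (hcontr : ∀ y ∈ Ioo a b, f y < y)
    {y : ℝ} (hy : y ∈ Ioo a b) : ∀ m n : ℤ, m < n → (f ^ n) y < (f ^ m) y := by
  have hstep : ∀ n : ℤ, (f ^ (n+1)) y < (f ^ n) y := by
    intro n
    have h1 : (f ^ (n+1)) y = f ((f ^ n) y) := by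
      rw [add_comm, zpow_add, zpow_one]; rfl
    rw [h1]
    exact hcontr _ (hf.zpow_mem_Ioo hfa hfb hcontr hy n)
  intro m n hmn
  obtain ⟨k, hk⟩ : ∃ k : ℕ, n = m + (k+1) := by
    refine ⟨(n - m - 1).toNat, ?_⟩
    have : ((n - m - 1).toNat : ℤ) = n - m - 1 := Int.toNat_of_nonneg (by omega)
    omega
  subst hk
  clear hmn
  induction k with
  | zero => simpa using hstep m
  | succ k ih =>
    refine lt_trans ?_ ih
    have := hstep (m + (k+1))
    convert this using 3
    push_cast
    rfl
    push_cast
    ring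

theorem kopell_propagate (f g : Equiv.Perm ℝ) (hf : IsIcoDiff 2 f)
    (hco : Commute f g) {a b c : ℝ} (ha : 0 ≤ a) (hb : b ≤ 1)
    (hfa : f a = a) (hfb : f b = b) (hcontr : ∀ y ∈ Ioo a b, f y < y)
    (hc : c ∈ Ioo a b) (hJ : ∀ z ∈ Icc (f c) c, g z = z) :
    ∀ y ∈ Ioo a b, g y = y := by
  intro y hy
  set P : ℤ → Prop := fun n => (f ^ n) y ≤ c with hP
  have hPn : ∃ n : ℤ, P n := by
    have h1 := hf.orbit_tendsto ha hb hfa hcontr hy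
    have h2 : ∀ᶠ n : ℕ in atTop, (f ^ n) y < c := h1.eventually_lt_const hc.1
    obtain ⟨N, hN⟩ := h2.exists
    exact ⟨(N:ℤ), by rw [hP]; simp only [zpow_natCast]; exact hN.le⟩
  have hPbdd : ∃ B : ℤ, ∀ n : ℤ, P n → B ≤ n := by
    have h1 := hf.inv_orbit_tendsto ha hb hfb hcontr hy
    have h2 : ∀ᶠ n : ℕ in atTop, c < (f⁻¹ ^ n) y := h1.eventually_const_lt hc.2
    obtain ⟨N, hN⟩ := h2.exists
    refine ⟨-(N:ℤ), ?_⟩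
    intro n hn
    by_contra hlt
    push_neg at hlt
    have h3 : (f ^ (-(N:ℤ))) y < (f ^ n) y :=
      hf.zpow_succ_lt hfa hfb hcontr hy n (-(N:ℤ)) hlt
    have h4 : (f ^ (-(N:ℤ))) y = (f⁻¹ ^ N) y := by
      rw [zpow_neg, zpow_natCast, inv_pow]
    rw [h4] at h3
    exact absurd hn (not_le.2 (lt_trans hN h3))
  obtain ⟨n₀, hn₀, hleast⟩ := Int.exists_least_of_bdd hPbdd hPn
  have hprev : ¬ P (n₀ - 1) := fun hp => absurd (hleast _ hp) (by omega)
  have hfz : f ^ n₀ = f * f ^ (n₀ - 1) := by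
    rw [← zpow_one_add f (n₀ - 1)]; congr 1; ring
  have hgt : c < (f ^ (n₀ - 1)) y := not_le.1 hprev
  have hmemJ : (f ^ n₀) y ∈ Icc (f c) c := by
    constructor
    · have h6 := hf.strictMono hgt
      rw [hfz]
      exact le_of_lt h6
    · exact hn₀
  have hgy := hJ _ hmemJ
  have hcomm' : g ((f ^ n₀) y) = (f ^ n₀) (g y) := by
    have h5 : g * f ^ n₀ = f ^ n₀ * g := hco.symm.zpow_right n₀
    calc g ((f ^ n₀) y) = (g * f ^ n₀) y := rfl
    _ = (f ^ n₀ * g) y := by rw [h5]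
    _ = (f ^ n₀) (g y) := rfl
  rw [hcomm'] at hgy
  exact (f ^ n₀).injective hgy

end IsIcoDiff


namespace IsIcoDiff
open Set Filter Topology

theorem kopell_J (f g : Equiv.Perm ℝ) (hf : IsIcoDiff 2 f) (hg : IsIcoDiff 2 g)
    (hco : Commute f g) {a b c : ℝ} (ha : 0 ≤ a) (hb : b ≤ 1)
    (hfa : f a = a) (hfb : f b = b) (hcontr : ∀ y ∈ Ioo a b, f y < y)
    (hc : c ∈ Ioo a b) (hgc : g c = c) :
    ∀ z ∈ Icc (f c) c, g z = z := by
  have hab : a < b := lt_trans hc.1 hc.2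
  have hIoo01 : Ioo a b ⊆ Ioo (0:ℝ) 1 := fun y hy =>
    ⟨lt_of_le_of_lt ha hy.1, lt_of_lt_of_le hy.2 hb⟩
  have hfc : f c ∈ Ioo a b := hf.maps_Ioo hfa hcontr hc
  set J : Set ℝ := Icc (f c) c with hJdef
  have hJIoo : J ⊆ Ioo a b := fun z hz => ⟨lt_of_lt_of_le hfc.1 hz.1, lt_of_le_of_lt hz.2 hc.2⟩
  have hJ01 : J ⊆ Ioo (0:ℝ) 1 := fun z hz => hIoo01 (hJIoo hz)
  have hc01 : c < 1 := lt_of_lt_of_le hc.2 hb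
  have hS : Icc a c ⊆ Ico (0:ℝ) 1 := fun z hz => ⟨le_trans ha hz.1, lt_of_le_of_lt hz.2 hc01⟩
  have hSIoo : Ioo a b ⊆ Ico (0:ℝ) 1 := fun z hz => Ioo_subset_Ico_self (hIoo01 hz)
  -- orbit of c
  set d : ℕ → ℝ := fun n => (f ^ n) c with hd
  have hdmem : ∀ n, d n ∈ Ioo a b := fun n => hf.pow_mem_Ioo_contract hfa hcontr hc n
  have hdsucc : ∀ n, d (n+1) = f (d n) := by
    intro n; show (f ^ (n+1)) c = f ((f ^ n) c); rw [pow_succ']; rfl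
  have hdanti : ∀ n, d (n+1) < d n := by
    intro n; rw [hdsucc n]; exact hcontr _ (hdmem n)
  have hdc : ∀ n, d n ≤ c := by
    intro n
    induction n with
    | zero => exact le_of_eq rfl
    | succ n ih => exact le_trans (hdanti n).le ih
  have hdtend : Tendsto d atTop (𝓝 a) := hf.orbit_tendsto ha hb hfa hcontr hc
  have hdS : ∀ n, d n ∈ Icc a c := fun n => ⟨(hdmem n).1.le, hdc n⟩
  -- derivative of f and bounds on Icc a c
  set F1 : ℝ → ℝ := derivWithin ⇑f (Ico 0 1) with hF1def
  have hF1cont : ContinuousOn F1 (Ico 0 1) :=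
    hf.1.continuousOn_derivWithin (uniqueDiffOn_Ico 0 1) one_le_two
  have hac : a ≤ c := hc.1.le
  obtain ⟨zm, hzm, hzmin⟩ := (isCompact_Icc (a := a) (b := c)).exists_isMinOn
    (nonempty_Icc.2 hac) (hF1cont.mono hS)
  set m : ℝ := F1 zm with hm
  have hmpos : 0 < m := hf.derivWithin_pos (hS hzm)
  have hmle : ∀ z ∈ Icc a c, m ≤ F1 z := fun z hz => hzmin hz
  have hF1' : ContDiffOn ℝ 1 F1 (Ico 0 1) :=
    hf.1.derivWithin (uniqueDiffOn_Ico 0 1) (by norm_num)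
  set F2 : ℝ → ℝ := derivWithin F1 (Ico 0 1) with hF2def
  have hF2cont : ContinuousOn F2 (Ico 0 1) :=
    hF1'.continuousOn_derivWithin (uniqueDiffOn_Ico 0 1) (le_refl 1)
  obtain ⟨M2, hM2⟩ := (isCompact_Icc (a := a) (b := c)).exists_bound_of_continuousOn
    (hF2cont.mono hS)
  have hM2nonneg : 0 ≤ M2 := le_trans (norm_nonneg _) (hM2 a ⟨le_refl a, hac⟩)
  have hlip : ∀ u ∈ Icc a c, ∀ v ∈ Icc a c, |F1 u - F1 v| ≤ M2 * |u - v| := by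
    intro u hu v hv
    have h1 : ∀ x ∈ Icc a c, HasDerivWithinAt F1 (F2 x) (Icc a c) x := by
      intro x hx
      exact (((hF1'.differentiableOn one_ne_zero) x (hS hx)).hasDerivWithinAt).mono hS
    have h2 := (convex_Icc a c).norm_image_sub_le_of_norm_hasDerivWithin_le h1
      (fun x hx => hM2 x hx) hv hu
    simpa [Real.norm_eq_abs] using h2
  set L : ℝ := M2 / m with hL
  have hLnonneg : 0 ≤ L := div_nonneg hM2nonneg hmpos.le
  set K : ℝ := Real.exp (L * (c - a)) with hK
  have hKpos : 0 < K := Real.exp_pos _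
  have hK1 : 1 ≤ K := by
    rw [hK, ← Real.exp_zero]
    exact Real.exp_le_exp.2 (mul_nonneg hLnonneg (by linarith))
  -- pointwise exponential distortion bound for F1
  have hstep : ∀ u ∈ Icc a c, ∀ v ∈ Icc a c, F1 u ≤ F1 v * Real.exp (L * |u - v|) := by
    intro u hu v hv
    have h1 : F1 u ≤ F1 v + M2 * |u - v| := by
      have := hlip u hu v hv
      have h2 := abs_le.1 this
      linarith [h2.2]
    have h3 : 0 < F1 v := lt_of_lt_of_le hmpos (hmle v hv)
    have h4 : M2 * |u - v| ≤ F1 v * (L * |u - v|) := by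
      have h5 : m ≤ F1 v := hmle v hv
      have h6 : (0:ℝ) ≤ M2 * |u - v| := mul_nonneg hM2nonneg (abs_nonneg _)
      have h7 : F1 v * (L * |u - v|) = (F1 v / m) * (M2 * |u - v|) := by
        rw [hL]; field_simp; try ring
      rw [h7]
      have h8 : 1 ≤ F1 v / m := (one_le_div hmpos).2 h5
      nlinarith
    have h7 : 1 + L * |u - v| ≤ Real.exp (L * |u - v|) := by
      have := Real.add_one_le_exp (L * |u - v|)
      linarith
    calc F1 u ≤ F1 v + M2 * |u - v| := h1
    _ ≤ F1 v + F1 v * (L * |u - v|) := by linarith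
    _ = F1 v * (1 + L * |u - v|) := by ring
    _ ≤ F1 v * Real.exp (L * |u - v|) := by
        apply mul_le_mul_of_nonneg_left h7 h3.le
  -- iterates of points of J
  have hiter_mem : ∀ u ∈ J, ∀ i : ℕ, (f ^ i) u ∈ Icc (d (i+1)) (d i) := by
    intro u hu i
    have hmono := (hf.pow i).strictMono.monotone
    constructor
    · have h1 : (f ^ i) (f c) ≤ (f ^ i) u := hmono hu.1
      have h2 : (f ^ i) (f c) = d (i+1) := by
        show (f ^ i) (f c) = (f ^ (i+1)) c
        rw [pow_succ]; rfl
      rwa [h2] at h1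
    · have h1 : (f ^ i) u ≤ (f ^ i) c := hmono hu.2
      exact h1
  have hiter_S : ∀ u ∈ J, ∀ i : ℕ, (f ^ i) u ∈ Icc a c := by
    intro u hu i
    have h1 := hiter_mem u hu i
    exact ⟨le_trans (hdmem (i+1)).1.le h1.1, le_trans h1.2 (hdc i)⟩
  have hiter_Ioo : ∀ u ∈ J, ∀ i : ℕ, (f ^ i) u ∈ Ioo (0:ℝ) 1 := by
    intro u hu i
    have h1 := hiter_mem u hu i
    exact ⟨lt_of_le_of_lt ha (lt_of_lt_of_le (hdmem (i+1)).1 h1.1),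
      lt_of_le_of_lt (le_trans h1.2 (hdc i)) hc01⟩
  have hsum : ∀ u ∈ J, ∀ v ∈ J, ∀ n : ℕ,
      ∑ i ∈ Finset.range n, |(f ^ i) u - (f ^ i) v| ≤ c - a := by
    intro u hu v hv n
    have h1 : ∀ i ∈ Finset.range n, |(f ^ i) u - (f ^ i) v| ≤ d i - d (i+1) := by
      intro i _
      have h2 := hiter_mem u hu i
      have h3 := hiter_mem v hv i
      rw [abs_sub_le_iff]
      constructor <;> linarith [h2.1, h2.2, h3.1, h3.2]
    calc ∑ i ∈ Finset.range n, |(f ^ i) u - (f ^ i) v|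
        ≤ ∑ i ∈ Finset.range n, (d i - d (i+1)) := Finset.sum_le_sum h1
    _ = d 0 - d n := Finset.sum_range_sub' d n
    _ ≤ c - a := by
        have h4 : d 0 = c := rfl
        have h5 := (hdmem n).1
        rw [h4]; linarith
  -- distortion control for iterates of f
  have hderiv_eq : ∀ x ∈ Ioo (0:ℝ) 1, deriv ⇑f x = F1 x := by
    intro x hx
    rw [hF1def, derivWithin_of_mem_nhds (Ico_mem_nhds_iff.2 hx)]
  have hdist : ∀ u ∈ J, ∀ v ∈ J, ∀ n : ℕ, deriv ⇑(f ^ n) u ≤ K * deriv ⇑(f ^ n) v := by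
    intro u hu v hv n
    have hu01 : u ∈ Ioo (0:ℝ) 1 := hJ01 hu
    have hv01 : v ∈ Ioo (0:ℝ) 1 := hJ01 hv
    rw [hf.deriv_pow_eq n hu01, hf.deriv_pow_eq n hv01]
    have hprod : ∀ i ∈ Finset.range n,
        deriv ⇑f ((f ^ i) u) ≤ deriv ⇑f ((f ^ i) v) * Real.exp (L * |(f ^ i) u - (f ^ i) v|) := by
      intro i _
      rw [hderiv_eq _ (hiter_Ioo u hu i), hderiv_eq _ (hiter_Ioo v hv i)]
      exact hstep _ (hiter_S u hu i) _ (hiter_S v hv i)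
    calc ∏ i ∈ Finset.range n, deriv ⇑f ((f ^ i) u)
        ≤ ∏ i ∈ Finset.range n,
            (deriv ⇑f ((f ^ i) v) * Real.exp (L * |(f ^ i) u - (f ^ i) v|)) := by
          apply Finset.prod_le_prod
          · intro i _
            have := hf.deriv_pos (hiter_Ioo u hu i)
            linarith
          · exact hprod
    _ = (∏ i ∈ Finset.range n, deriv ⇑f ((f ^ i) v)) *
          ∏ i ∈ Finset.range n, Real.exp (L * |(f ^ i) u - (f ^ i) v|) := by
          rw [Finset.prod_mul_distrib]
    _ = (∏ i ∈ Finset.range n, deriv ⇑f ((f ^ i) v)) *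
          Real.exp (∑ i ∈ Finset.range n, L * |(f ^ i) u - (f ^ i) v|) := by
          rw [Real.exp_sum]
    _ ≤ (∏ i ∈ Finset.range n, deriv ⇑f ((f ^ i) v)) * K := by
          apply mul_le_mul_of_nonneg_left
          · rw [hK]
            apply Real.exp_le_exp.2
            rw [← Finset.mul_sum]
            exact mul_le_mul_of_nonneg_left (hsum u hu v hv n) hLnonneg
          · apply Finset.prod_nonneg
            intro i _
            exact (hf.deriv_pos (hiter_Ioo v hv i)).le
    _ = K * ∏ i ∈ Finset.range n, deriv ⇑f ((f ^ i) v) := mul_comm _ _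
  -- generic facts about commuting maps fixing c
  have hpowc : ∀ w : Equiv.Perm ℝ, w c = c → ∀ M : ℕ, (w ^ M) c = c := by
    intro w hwc M
    induction M with
    | zero => rfl
    | succ M ih =>
      have h1 : (w ^ (M+1)) c = w ((w ^ M) c) := by rw [pow_succ']; rfl
      rw [h1, ih, hwc]
  have hwfc : ∀ w : Equiv.Perm ℝ, Commute w f → w c = c → w (f c) = f c := by
    intro w hwf hwc
    calc w (f c) = (w * f) c := rfl
    _ = (f * w) c := by rw [hwf]
    _ = f (w c) := rfl
    _ = f c := by rw [hwc]
  have hwJ : ∀ w : Equiv.Perm ℝ, IsIcoDiff 2 w → Commute w f → w c = c →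
      ∀ z ∈ J, w z ∈ J := by
    intro w hw hwf hwc z hz
    constructor
    · have h1 := hw.strictMono.monotone hz.1
      rwa [hwfc w hwf hwc] at h1
    · have h1 := hw.strictMono.monotone hz.2
      rwa [hwc] at h1
  have ha01 : a ∈ Ico (0:ℝ) 1 := ⟨ha, lt_of_lt_of_le hab hb⟩
  have hdIco : ∀ n, d n ∈ Ico (0:ℝ) 1 := fun n => hSIoo (hdmem n)
  -- the uniform derivative upper bound
  have hbound : ∀ w : Equiv.Perm ℝ, IsIcoDiff 2 w → Commute w f → w c = c →
      ∀ x ∈ J, deriv ⇑w x ≤ K := by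
    intro w hw hwf hwc x hx
    have hx01 : x ∈ Ioo (0:ℝ) 1 := hJ01 hx
    have hwx : w x ∈ J := hwJ w hw hwf hwc x hx
    have hwd : ∀ n : ℕ, w (d n) = d n := by
      intro n
      have h5 : w * f ^ n = f ^ n * w := hwf.pow_right n
      calc w (d n) = (w * f ^ n) c := rfl
      _ = (f ^ n * w) c := by rw [h5]
      _ = (f ^ n) (w c) := rfl
      _ = d n := by rw [hwc]
    have hdtend' : Tendsto d atTop (𝓝[Ico (0:ℝ) 1] a) :=
      tendsto_nhdsWithin_of_tendsto_nhds_of_eventually_within d hdtend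
        (Eventually.of_forall hdIco)
    have hwa : w a = a := by
      have h1 : ContinuousWithinAt ⇑w (Ico 0 1) a := hw.continuousOn a ha01
      have h2 : Tendsto (fun n => w (d n)) atTop (𝓝 (w a)) := h1.tendsto.comp hdtend'
      have h3 : Tendsto (fun n => w (d n)) atTop (𝓝 a) := by
        simp only [hwd]; exact hdtend
      exact tendsto_nhds_unique h2 h3
    set W1 : ℝ → ℝ := derivWithin ⇑w (Ico 0 1) with hW1def
    have hW1cont : ContinuousOn W1 (Ico 0 1) :=
      hw.1.continuousOn_derivWithin (uniqueDiffOn_Ico 0 1) one_le_two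
    have hW1a : W1 a = 1 := by
      have hdW : HasDerivWithinAt ⇑w (W1 a) (Ico 0 1) a :=
        ((hw.1.differentiableOn (by norm_num)) a ha01).hasDerivWithinAt
      have h1 := hasDerivWithinAt_iff_tendsto_slope.1 hdW
      have h2 : Tendsto d atTop (𝓝[(Ico (0:ℝ) 1) \ {a}] a) :=
        tendsto_nhdsWithin_of_tendsto_nhds_of_eventually_within d hdtend
          (Eventually.of_forall (fun n =>
            ⟨hdIco n, by simp only [mem_singleton_iff]; exact ne_of_gt (hdmem n).1⟩))
      have h3 : Tendsto (fun n => slope ⇑w a (d n)) atTop (𝓝 (W1 a)) := h1.comp h2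
      have h4 : ∀ n, slope ⇑w a (d n) = 1 := by
        intro n
        rw [slope_def_field, hwd n, hwa]
        exact div_self (ne_of_gt (sub_pos.2 (hdmem n).1))
      have h5 : Tendsto (fun n => slope ⇑w a (d n)) atTop (𝓝 1) := by
        simp only [h4]; exact tendsto_const_nhds
      exact tendsto_nhds_unique h3 h5
    have hwx01 : w x ∈ Ioo (0:ℝ) 1 := hJ01 hwx
    have hchain : ∀ n : ℕ, deriv ⇑w x ≤ K * W1 ((f ^ n) x) := by
      intro n
      have hfx01 : (f ^ n) x ∈ Ioo (0:ℝ) 1 := hiter_Ioo x hx n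
      have hid : deriv ⇑w ((f ^ n) x) * deriv ⇑(f ^ n) x
          = deriv ⇑(f ^ n) (w x) * deriv ⇑w x :=
        hw.deriv_comm (hf.pow n) (hwf.pow_right n) hx01
      have hA : 0 < deriv ⇑w ((f ^ n) x) := hw.deriv_pos hfx01
      have hC : 0 < deriv ⇑(f ^ n) (w x) := (hf.pow n).deriv_pos hwx01
      have hdistn : deriv ⇑(f ^ n) x ≤ K * deriv ⇑(f ^ n) (w x) := hdist x hx (w x) hwx n
      have hW1eq : W1 ((f ^ n) x) = deriv ⇑w ((f ^ n) x) := by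
        rw [hW1def, derivWithin_of_mem_nhds (Ico_mem_nhds_iff.2 hfx01)]
      rw [hW1eq]
      have h6 : deriv ⇑w ((f ^ n) x) * deriv ⇑(f ^ n) x
          ≤ deriv ⇑w ((f ^ n) x) * (K * deriv ⇑(f ^ n) (w x)) :=
        mul_le_mul_of_nonneg_left hdistn hA.le
      rw [hid] at h6
      have h7 : deriv ⇑w x * deriv ⇑(f ^ n) (w x)
          ≤ (K * deriv ⇑w ((f ^ n) x)) * deriv ⇑(f ^ n) (w x) := by
        calc deriv ⇑w x * deriv ⇑(f ^ n) (w x)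
            = deriv ⇑(f ^ n) (w x) * deriv ⇑w x := mul_comm _ _
        _ ≤ deriv ⇑w ((f ^ n) x) * (K * deriv ⇑(f ^ n) (w x)) := h6
        _ = (K * deriv ⇑w ((f ^ n) x)) * deriv ⇑(f ^ n) (w x) := by ring
      exact le_of_mul_le_mul_right h7 hC
    have hlimW : Tendsto (fun n => K * W1 ((f ^ n) x)) atTop (𝓝 (K * 1)) := by
      apply Tendsto.const_mul
      have h1 : ContinuousWithinAt W1 (Ico 0 1) a := hW1cont a ha01
      have h2 : Tendsto (fun n : ℕ => (f ^ n) x) atTop (𝓝 a) :=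
        hf.orbit_tendsto ha hb hfa hcontr (hJIoo hx)
      have h3 : Tendsto (fun n : ℕ => (f ^ n) x) atTop (𝓝[Ico (0:ℝ) 1] a) :=
        tendsto_nhdsWithin_of_tendsto_nhds_of_eventually_within _ h2
          (Eventually.of_forall (fun n =>
            hSIoo (hf.pow_mem_Ioo_contract hfa hcontr (hJIoo hx) n)))
      have h4 := h1.tendsto.comp h3
      rwa [hW1a] at h4
    have h8 := ge_of_tendsto hlimW (Eventually.of_forall hchain)
    linarith [h8]
  -- uniform lower bound
  have hlow : ∀ w : Equiv.Perm ℝ, IsIcoDiff 2 w → Commute w f → w c = c →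
      ∀ x ∈ J, 1 / K ≤ deriv ⇑w x := by
    intro w hw hwf hwc x hx
    have hx01 : x ∈ Ioo (0:ℝ) 1 := hJ01 hx
    have hwx : w x ∈ J := hwJ w hw hwf hwc x hx
    have hwinvc : w⁻¹ c = c := by
      have h1 : w⁻¹ (w c) = c := w.inv_apply_self c
      rwa [hwc] at h1
    have hinvb : deriv ⇑w⁻¹ (w x) ≤ K :=
      hbound w⁻¹ hw.inv hwf.inv_left hwinvc (w x) hwx
    have hprod : deriv ⇑w⁻¹ (w x) * deriv ⇑w x = 1 := by
      have h1 := hasDerivAt_mul hw.inv hw hx01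
      have h2 : w⁻¹ * w = 1 := inv_mul_cancel w
      rw [h2] at h1
      have h3 : HasDerivAt (⇑(1 : Equiv.Perm ℝ)) 1 x := by
        have h4 : ⇑(1 : Equiv.Perm ℝ) = id := rfl
        rw [h4]; exact hasDerivAt_id x
      exact h1.unique h3
    have hpos : 0 < deriv ⇑w x := hw.deriv_pos hx01
    rw [div_le_iff₀ hKpos]
    calc (1:ℝ) = deriv ⇑w⁻¹ (w x) * deriv ⇑w x := hprod.symm
    _ ≤ K * deriv ⇑w x := mul_le_mul_of_nonneg_right hinvb hpos.le
    _ = deriv ⇑w x * K := mul_comm _ _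
  -- no element of the centralizer fixing c can move a point of J up
  have hno : ∀ w : Equiv.Perm ℝ, IsIcoDiff 2 w → Commute w f → w c = c →
      ∀ y ∈ J, w y ≤ y := by
    intro w hw hwf hwc
    by_contra hcon
    push_neg at hcon
    obtain ⟨y₀, hy₀, hlt⟩ := hcon
    set q := w y₀ with hq
    have hqJ : q ∈ J := hwJ w hw hwf hwc y₀ hy₀
    have hy₀q : y₀ < q := hlt
    have hpowprops : ∀ M : ℕ, IsIcoDiff 2 (w ^ M) ∧ Commute (w ^ M) f ∧ (w ^ M) c = c :=
      fun M => ⟨hw.pow M, hwf.pow_left M, hpowc w hwc M⟩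
    set e : ℕ → ℝ := fun M => (w ^ M) y₀ with he
    have heJ : ∀ M : ℕ, e M ∈ J := fun M =>
      hwJ _ (hpowprops M).1 (hpowprops M).2.1 (hpowprops M).2.2 y₀ hy₀
    have hemono : Monotone e := by
      apply monotone_nat_of_le_succ
      intro M
      have h1 : e (M+1) = (w ^ M) q := by
        show (w ^ (M+1)) y₀ = (w ^ M) (w y₀); rw [pow_succ]; rfl
      rw [h1]
      show (w ^ M) y₀ ≤ (w ^ M) q
      exact (hw.pow M).strictMono.monotone hy₀q.le
    have hebdd : BddAbove (Set.range e) := ⟨c, by rintro z ⟨M, rfl⟩; exact (heJ M).2⟩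
    have helim := tendsto_atTop_ciSup hemono hebdd
    have hdiff0 : Tendsto (fun M => e (M+1) - e M) atTop (𝓝 0) := by
      have h1 := (helim.comp (tendsto_add_atTop_nat 1)).sub helim
      simpa using h1
    have hgap : ∀ M : ℕ, (q - y₀) / K ≤ e (M+1) - e M := by
      intro M
      have hcont : ContinuousOn ⇑(w ^ M) (Icc y₀ q) := by
        apply ((hw.pow M).continuousOn).mono
        intro z hz
        exact hSIoo (hJIoo ⟨le_trans hy₀.1 hz.1, le_trans hz.2 hqJ.2⟩)
      have hder : ∀ z ∈ Ioo y₀ q, HasDerivAt ⇑(w ^ M) (deriv ⇑(w ^ M) z) z := by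
        intro z hz
        exact (hw.pow M).hasDerivAt (hJ01 ⟨le_trans hy₀.1 hz.1.le, le_trans hz.2.le hqJ.2⟩)
      obtain ⟨ξ, hξ, hslope⟩ := exists_hasDerivAt_eq_slope (⇑(w ^ M)) _ hy₀q hcont hder
      have hξJ : ξ ∈ J := ⟨le_trans hy₀.1 hξ.1.le, le_trans hξ.2.le hqJ.2⟩
      have hlow' := hlow (w ^ M) (hpowprops M).1 (hpowprops M).2.1 (hpowprops M).2.2 ξ hξJ
      rw [hslope] at hlow'
      have hnum : (w ^ M) q = e (M+1) := by
        show (w ^ M) (w y₀) = (w ^ (M+1)) y₀; rw [pow_succ]; rfl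
      rw [hnum] at hlow'
      have hqy : 0 < q - y₀ := sub_pos.2 hy₀q
      have h9 := (le_div_iff₀ hqy).1 hlow'
      calc (q - y₀) / K = 1 / K * (q - y₀) := by ring
      _ ≤ e (M+1) - (w ^ M) y₀ := h9
      _ = e (M+1) - e M := rfl
    have hposgap : (0:ℝ) < (q - y₀) / K := div_pos (sub_pos.2 hy₀q) hKpos
    have hev : ∀ᶠ M in atTop, e (M+1) - e M < (q - y₀) / K :=
      hdiff0.eventually_lt_const hposgap
    obtain ⟨M, hM⟩ := hev.exists
    exact absurd (hgap M) (not_le.2 hM)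
  -- conclude
  intro z hz
  have h1 : g z ≤ z := hno g hg hco.symm hgc z hz
  have h2 : g⁻¹ z ≤ z := by
    refine hno g⁻¹ hg.inv hco.symm.inv_left ?_ z hz
    have h3 : g⁻¹ (g c) = c := g.inv_apply_self c
    rwa [hgc] at h3
  have h4 : z ≤ g z := by
    have h5 := hg.strictMono.monotone h2
    rwa [Equiv.Perm.apply_inv_self] at h5
  exact le_antisymm h1 h4

end IsIcoDiff

namespace IsIcoDiff
open Set Filter Topology

theorem sign_const {u : Equiv.Perm ℝ} (hu : IsIcoDiff 2 u) {a b : ℝ} (ha : 0 ≤ a) (hb : b ≤ 1)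
    (hfree : ∀ y ∈ Ioo a b, u y ≠ y) :
    (∀ y ∈ Ioo a b, u y < y) ∨ (∀ y ∈ Ioo a b, y < u y) := by
  by_contra hcon
  push_neg at hcon
  obtain ⟨⟨y₁, hy₁, hy₁'⟩, ⟨y₂, hy₂, hy₂'⟩⟩ := hcon
  have h1 : y₁ < u y₁ := lt_of_le_of_ne hy₁' (Ne.symm (hfree y₁ hy₁))
  have h2 : u y₂ < y₂ := lt_of_le_of_ne hy₂' (hfree y₂ hy₂)
  have hI : Ioo a b ⊆ Ioo (0:ℝ) 1 := fun z hz =>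
    ⟨lt_of_le_of_lt ha hz.1, lt_of_lt_of_le hz.2 hb⟩
  have hne : y₁ ≠ y₂ := by
    intro h; rw [h] at h1; linarith
  have hcont : ContinuousOn (fun z => u z - z) (uIcc y₁ y₂) := by
    apply ContinuousOn.sub _ continuousOn_id
    intro z hz
    have hz' : z ∈ Ioo a b := by
      rcases le_total y₁ y₂ with hle | hle
      · rw [uIcc_of_le hle] at hz
        exact ⟨lt_of_lt_of_le hy₁.1 hz.1, lt_of_le_of_lt hz.2 hy₂.2⟩
      · rw [uIcc_of_ge hle] at hz
        exact ⟨lt_of_lt_of_le hy₂.1 hz.1, lt_of_le_of_lt hz.2 hy₁.2⟩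
    exact (hu.continuousAt (hI hz')).continuousWithinAt
  have h0 : (0:ℝ) ∈ uIcc ((fun z => u z - z) y₁) ((fun z => u z - z) y₂) := by
    simp only [mem_uIcc]
    exact Or.inr ⟨by linarith, by linarith⟩
  obtain ⟨z, hz, hz0⟩ := intermediate_value_uIcc hcont h0
  have hz' : z ∈ Ioo a b := by
    rcases le_total y₁ y₂ with hle | hle
    · rw [uIcc_of_le hle] at hz
      exact ⟨lt_of_lt_of_le hy₁.1 hz.1, lt_of_le_of_lt hz.2 hy₂.2⟩
    · rw [uIcc_of_ge hle] at hz
      exact ⟨lt_of_lt_of_le hy₂.1 hz.1, lt_of_le_of_lt hz.2 hy₁.2⟩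
  exact hfree z hz' (by linarith [sub_eq_zero.1 hz0])

theorem kopell (u g : Equiv.Perm ℝ) (hu : IsIcoDiff 2 u) (hg : IsIcoDiff 2 g)
    (hco : Commute u g) {a b c : ℝ} (ha : 0 ≤ a) (hb : b ≤ 1)
    (hua : u a = a) (hub : u b = b) (hfree : ∀ y ∈ Ioo a b, u y ≠ y)
    (hc : c ∈ Ioo a b) (hgc : g c = c) : ∀ y ∈ Ioo a b, g y = y := by
  rcases hu.sign_const ha hb hfree with hdown | hup
  · exact kopell_propagate u g hu hco ha hb hua hub hdown hc
      (kopell_J u g hu hg hco ha hb hua hub hdown hc hgc)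
  · have hua' : u⁻¹ a = a := by
      have h1 : u⁻¹ (u a) = a := u.inv_apply_self a
      rwa [hua] at h1
    have hub' : u⁻¹ b = b := by
      have h1 : u⁻¹ (u b) = b := u.inv_apply_self b
      rwa [hub] at h1
    have hdown' : ∀ y ∈ Ioo a b, u⁻¹ y < y := by
      intro y hy
      have hmem : u⁻¹ y ∈ Ioo a b := by
        constructor
        · by_contra hle
          push_neg at hle
          have h1 := hu.strictMono.monotone hle
          rw [Equiv.Perm.apply_inv_self, hua] at h1
          exact absurd hy.1 (not_lt.2 h1)
        · by_contra hge
          push_neg at hge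
          have h1 := hu.strictMono.monotone hge
          rw [Equiv.Perm.apply_inv_self] at h1
          rw [hub] at h1
          exact absurd hy.2 (not_lt.2 h1)
      have h2 := hup _ hmem
      rwa [Equiv.Perm.apply_inv_self] at h2
    exact kopell_propagate u⁻¹ g hu.inv hco.inv_left ha hb hua' hub' hdown' hc
      (kopell_J u⁻¹ g hu.inv hg hco.inv_left ha hb hua' hub' hdown' hc hgc)

end IsIcoDiff


namespace IsIcoDiff
open Set Filter Topology

def psupp (g : Equiv.Perm ℝ) : Set ℝ := {y | g y ≠ y}

theorem psupp_subset (hg : IsIcoDiff 2 g) : psupp g ⊆ Ioo (0:ℝ) 1 := by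
  intro y hy
  by_contra hmem
  rcases lt_or_ge y 0 with h | h
  · exact hy (hg.2.2.2.2 y (fun hm => absurd hm.1 (not_le.2 h)))
  · rcases eq_or_lt_of_le h with h0 | h0
    · exact hy (by rw [← h0]; exact hg.fix_zero)
    · have h1 : ¬ y < 1 := fun h1 => hmem ⟨h0, h1⟩
      exact hy (hg.2.2.2.2 y (fun hm => h1 hm.2))

theorem isOpen_psupp (hg : IsIcoDiff 2 g) : IsOpen (psupp g) := by
  rw [isOpen_iff_eventually]
  intro y hy
  have hy01 : y ∈ Ioo (0:ℝ) 1 := hg.psupp_subset hy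
  have h1 : ContinuousAt (fun z => g z - z) y := (hg.continuousAt hy01).sub continuousAt_id
  have h2 : (fun z => g z - z) y ≠ 0 := sub_ne_zero.2 hy
  have h3 := h1.eventually_ne h2
  exact h3.mono (fun z hz => sub_ne_zero.1 hz)

theorem mem_psupp_comm {u g : Equiv.Perm ℝ} (hco : Commute u g) {y : ℝ} :
    u y ∈ psupp g ↔ y ∈ psupp g := by
  have h1 : g (u y) = u (g y) := by
    calc g (u y) = (g * u) y := rfl
    _ = (u * g) y := by rw [hco.symm]
    _ = u (g y) := rfl
  constructor
  · intro h hc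
    exact h (by rw [h1, hc])
  · intro h hc
    rw [h1] at hc
    exact h (u.injective hc)

/-- the connected component of a point of the support is an open interval with
fixed endpoints -/
theorem component_structure {g : Equiv.Perm ℝ} (hg : IsIcoDiff 2 g) {x : ℝ}
    (hgx : g x ≠ x) :
    ∃ a b : ℝ, 0 ≤ a ∧ b ≤ 1 ∧ x ∈ Ioo a b ∧ g a = a ∧ g b = b ∧
      connectedComponentIn (psupp g) x = Ioo a b := by
  set S := psupp g with hS
  have hxS : x ∈ S := hgx
  set I := connectedComponentIn S x with hI
  have hIopen : IsOpen I := hg.isOpen_psupp.connectedComponentIn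
  have hIconn : IsPreconnected I := isPreconnected_connectedComponentIn
  have hxI : x ∈ I := mem_connectedComponentIn hxS
  have hIS : I ⊆ S := connectedComponentIn_subset S x
  have hIsub : I ⊆ Ioo (0:ℝ) 1 := fun y hy => hg.psupp_subset (hIS hy)
  have hbddb : BddBelow I := ⟨0, fun y hy => (hIsub hy).1.le⟩
  have hbdda : BddAbove I := ⟨1, fun y hy => (hIsub hy).2.le⟩
  have hne : I.Nonempty := ⟨x, hxI⟩
  set a := sInf I with hadef
  set b := sSup I with hbdef
  have hord : OrdConnected I := hIconn.ordConnected
  have hIoo : I = Ioo a b := by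
    apply Subset.antisymm
    · intro y hy
      constructor
      · rcases eq_or_lt_of_le (csInf_le hbddb hy) with he | hlt
        · exfalso
          obtain ⟨ε, hε, hball⟩ := Metric.isOpen_iff.1 hIopen y hy
          have h2 : y - ε/2 ∈ I := hball (by
            simp only [Metric.mem_ball, Real.dist_eq, abs_sub_comm]
            rw [abs_of_nonneg (by linarith)]
            linarith)
          have h3 : a ≤ y - ε/2 := csInf_le hbddb h2
          rw [← he] at h3
          linarith
        · exact hlt
      · rcases eq_or_lt_of_le (le_csSup hbdda hy) with he | hlt
        · exfalso
          obtain ⟨ε, hε, hball⟩ := Metric.isOpen_iff.1 hIopen y hy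
          have h2 : y + ε/2 ∈ I := hball (by
            simp only [Metric.mem_ball, Real.dist_eq]
            rw [abs_of_nonneg (by linarith)]
            linarith)
          have h3 : y + ε/2 ≤ b := le_csSup hbdda h2
          rw [he] at h3
          linarith
        · exact hlt
    · intro y hy
      obtain ⟨u, huI, hu⟩ := (csInf_lt_iff hbddb hne).1 hy.1
      obtain ⟨v, hvI, hv⟩ := (lt_csSup_iff hbdda hne).1 hy.2
      exact hord.out huI hvI ⟨hu.le, hv.le⟩
  have hax : a < x := by rw [hIoo] at hxI; exact hxI.1
  have hxb : x < b := by rw [hIoo] at hxI; exact hxI.2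
  have ha0 : 0 ≤ a := le_csInf hne (fun y hy => (hIsub hy).1.le)
  have hb1 : b ≤ 1 := csSup_le hne (fun y hy => (hIsub hy).2.le)
  -- endpoints are fixed
  have hga : g a = a := by
    by_contra hga
    have haS : a ∈ S := hga
    obtain ⟨ε, hε, hball⟩ := Metric.isOpen_iff.1 hg.isOpen_psupp a haS
    have hsub2 : Ioo (a - ε/2) b ⊆ S := by
      intro z hz
      rcases lt_or_ge z (a + ε/2) with h | h
      · apply hball
        simp only [Metric.mem_ball, Real.dist_eq]
        rw [abs_lt]
        constructor <;> linarith [hz.1, h]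
      · have : z ∈ Ioo a b := ⟨by linarith [hz.1], hz.2⟩
        rw [← hIoo] at this
        exact hIS this
    have hconn2 : IsPreconnected (Ioo (a - ε/2) b) := isPreconnected_Ioo
    have hx2 : x ∈ Ioo (a - ε/2) b := ⟨by linarith, hxb⟩
    have hsub3 : Ioo (a - ε/2) b ⊆ I := hconn2.subset_connectedComponentIn hx2 hsub2
    have h4 : a - ε/4 ∈ I := hsub3 ⟨by linarith, by linarith⟩
    have h5 := csInf_le hbddb h4
    linarith
  have hgb : g b = b := by
    rcases eq_or_lt_of_le hb1 with he | hlt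
    · rw [he]; exact hg.fix_one
    · by_contra hgb
      have hbS : b ∈ S := hgb
      obtain ⟨ε, hε, hball⟩ := Metric.isOpen_iff.1 hg.isOpen_psupp b hbS
      have hsub2 : Ioo a (b + ε/2) ⊆ S := by
        intro z hz
        rcases lt_or_ge (b - ε/2) z with h | h
        · apply hball
          simp only [Metric.mem_ball, Real.dist_eq]
          rw [abs_lt]
          constructor <;> linarith [hz.2, h]
        · have : z ∈ Ioo a b := ⟨hz.1, by linarith⟩
          rw [← hIoo] at this
          exact hIS this
      have hconn2 : IsPreconnected (Ioo a (b + ε/2)) := isPreconnected_Ioo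
      have hx2 : x ∈ Ioo a (b + ε/2) := ⟨hax, by linarith⟩
      have hsub3 : Ioo a (b + ε/2) ⊆ I := hconn2.subset_connectedComponentIn hx2 hsub2
      have h4 : b + ε/4 ∈ I := hsub3 ⟨by linarith, by linarith⟩
      have h5 := le_csSup hbdda h4
      linarith
  exact ⟨a, b, ha0, hb1, ⟨hax, hxb⟩, hga, hgb, hIoo⟩

end IsIcoDiff


namespace IsIcoDiff
open Set Filter Topology

theorem image_component_subset {u g : Equiv.Perm ℝ} (hu : IsIcoDiff 2 u)
    (hg : IsIcoDiff 2 g) (hco : Commute u g) {x : ℝ} (hx : x ∈ psupp g) :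
    u '' connectedComponentIn (psupp g) x ⊆ connectedComponentIn (psupp g) (u x) := by
  apply IsPreconnected.subset_connectedComponentIn
  · apply isPreconnected_connectedComponentIn.image
    intro y hy
    have hy01 : y ∈ Ioo (0:ℝ) 1 := hg.psupp_subset (connectedComponentIn_subset _ _ hy)
    exact (hu.continuousAt hy01).continuousWithinAt
  · exact mem_image_of_mem u (mem_connectedComponentIn hx)
  · rintro z ⟨y, hy, rfl⟩
    exact (mem_psupp_comm hco).2 (connectedComponentIn_subset _ _ hy)

theorem stepA {u g : Equiv.Perm ℝ} (hu : IsIcoDiff 2 u) (hg : IsIcoDiff 2 g)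
    (hco : Commute u g) {x : ℝ} (hgx : g x ≠ x) {a b : ℝ}
    (hcomp : connectedComponentIn (psupp g) x = Ioo a b) (ha : 0 ≤ a) (hb : b ≤ 1)
    (hax : x ∈ Ioo a b) (hga : g a = a) (hgb : g b = b) :
    ∀ y ∈ Ioo a b, u y ∈ Ioo a b := by
  have hxS : x ∈ psupp g := hgx
  by_cases hux : u x ∈ Ioo a b
  · intro y hy
    have h1 : u y ∈ connectedComponentIn (psupp g) (u x) := by
      apply image_component_subset hu hg hco hxS
      exact mem_image_of_mem u (by rw [hcomp]; exact hy)
    have h2 : connectedComponentIn (psupp g) (u x) = connectedComponentIn (psupp g) x := by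
      apply (connectedComponentIn_eq ?_).symm
      rw [hcomp]; exact hux
    rw [h2, hcomp] at h1
    exact h1
  · exfalso
    have hdisj : ∀ z, z ∈ connectedComponentIn (psupp g) (u x) → z ∉ Ioo a b := by
      intro z hz1 hz2
      have h1 : connectedComponentIn (psupp g) z = connectedComponentIn (psupp g) (u x) :=
        (connectedComponentIn_eq hz1).symm
      have h2 : connectedComponentIn (psupp g) z = connectedComponentIn (psupp g) x :=
        (connectedComponentIn_eq (by rw [hcomp]; exact hz2)).symm
      rw [h2] at h1
      apply hux
      rw [← hcomp, h1]
      exact mem_connectedComponentIn ((mem_psupp_comm hco).2 hxS)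
    have hfreeu : ∀ y ∈ Ioo a b, u y ≠ y := by
      intro y hy hne
      have h1 : u y ∈ connectedComponentIn (psupp g) (u x) := by
        apply image_component_subset hu hg hco hxS
        exact mem_image_of_mem u (by rw [hcomp]; exact hy)
      rw [hne] at h1
      exact hdisj y h1 hy
    have hxSu : x ∈ psupp u := hfreeu x hax
    obtain ⟨α, β, hα0, hβ1, hxαβ, huα, huβ, hcompU⟩ := hu.component_structure hxSu
    have hIK : Ioo a b ⊆ Ioo α β := by
      rw [← hcompU]
      apply IsPreconnected.subset_connectedComponentIn isPreconnected_Ioo hax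
      intro z hz
      exact hfreeu z hz
    have hfreeU : ∀ y ∈ Ioo α β, u y ≠ y := by
      intro y hy
      have := connectedComponentIn_subset (psupp u) x
      rw [hcompU] at this
      exact this hy
    have hUx : u x ∈ Ioo α β := by
      constructor
      · have := hu.strictMono hxαβ.1
        rwa [huα] at this
      · have := hu.strictMono hxαβ.2
        rwa [huβ] at this
    have hnotm : u x ≤ a ∨ b ≤ u x := by
      rcases lt_or_ge a (u x) with h1 | h1
      · rcases lt_or_ge (u x) b with h2 | h2
        · exact absurd ⟨h1, h2⟩ hux
        · exact Or.inr h2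
      · exact Or.inl h1
    have hcfix : ∃ c ∈ Ioo α β, g c = c := by
      rcases hnotm with h1 | h1
      · exact ⟨a, ⟨lt_of_lt_of_le hUx.1 h1, lt_trans hax.1 hxαβ.2⟩, hga⟩
      · exact ⟨b, ⟨lt_trans hxαβ.1 hax.2, lt_of_le_of_lt h1 hUx.2⟩, hgb⟩
    obtain ⟨c, hcαβ, hgc⟩ := hcfix
    have hgid := kopell u g hu hg hco hα0 hβ1 huα huβ hfreeU hcαβ hgc
    exact hgx (hgid x (hIK hax))

end IsIcoDiff


namespace IsIcoDiff
open Set Filter Topology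

theorem holder_commutator (H : Subgroup (Equiv.Perm ℝ)) (hH : ∀ u ∈ H, IsIcoDiff 2 u)
    {g : Equiv.Perm ℝ} (hg : IsIcoDiff 2 g) (hcomm : ∀ u ∈ H, Commute u g)
    {a b x : ℝ} (ha : 0 ≤ a) (hb : b ≤ 1) (hx : x ∈ Ioo a b)
    (hga : g a = a) (hgb : g b = b) (hfree : ∀ y ∈ Ioo a b, g y ≠ y)
    (hmaps : ∀ u ∈ H, ∀ y ∈ Ioo a b, u y ∈ Ioo a b) :
    ∀ u ∈ H, ∀ v ∈ H, ∀ y ∈ Ioo a b, ⁅u, v⁆ y = y := by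
  set I := Ioo a b with hIdef
  -- Kopell freeness
  have hKop : ∀ u ∈ H, (∃ c ∈ I, u c = c) → ∀ y ∈ I, u y = y := by
    rintro u hu ⟨c, hc, hcu⟩
    exact kopell g u hg (hH u hu) (hcomm u hu).symm ha hb hga hgb hfree hc hcu
  -- trichotomy for single elements
  have htri : ∀ u ∈ H, (∀ y ∈ I, u y = y) ∨ (∀ y ∈ I, u y < y) ∨ (∀ y ∈ I, y < u y) := by
    intro u hu
    by_cases hfix : ∃ c ∈ I, u c = c
    · exact Or.inl (hKop u hu hfix)
    · push_neg at hfix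
      exact Or.inr ((hH u hu).sign_const ha hb hfix)
  -- trichotomy for pairs
  have hpair : ∀ u ∈ H, ∀ v ∈ H,
      (∀ y ∈ I, u y = v y) ∨ (∀ y ∈ I, u y < v y) ∨ (∀ y ∈ I, v y < u y) := by
    intro u hu v hv
    have hw : u⁻¹ * v ∈ H := H.mul_mem (H.inv_mem hu) hv
    have humono := (hH u hu).strictMono
    rcases htri _ hw with h1 | h1 | h1
    · refine Or.inl (fun y hy => ?_)
      have h2 := h1 y hy
      have h3 : u (u⁻¹ (v y)) = u y := by
        rw [show u⁻¹ (v y) = (u⁻¹ * v) y from rfl, h2]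
      rw [Equiv.Perm.apply_inv_self] at h3
      exact h3.symm
    · refine Or.inr (Or.inr (fun y hy => ?_))
      have h2 : u⁻¹ (v y) < y := h1 y hy
      have h3 := humono h2
      rwa [Equiv.Perm.apply_inv_self] at h3
    · refine Or.inr (Or.inl (fun y hy => ?_))
      have h2 : y < u⁻¹ (v y) := h1 y hy
      have h3 := humono h2
      rwa [Equiv.Perm.apply_inv_self] at h3
  -- comparison at the base point globalizes
  have hat : ∀ u ∈ H, ∀ v ∈ H, u x < v x → ∀ y ∈ I, u y < v y := by
    intro u hu v hv hxc
    rcases hpair u hu v hv with h1 | h1 | h1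
    · exact absurd (h1 x hx) (ne_of_lt hxc)
    · exact h1
    · exact absurd (h1 x hx) (not_lt.2 hxc.le)
  have hatle : ∀ u ∈ H, ∀ v ∈ H, u x ≤ v x → ∀ y ∈ I, u y ≤ v y := by
    intro u hu v hv hxc
    rcases hpair u hu v hv with h1 | h1 | h1
    · exact fun y hy => (h1 y hy).le
    · exact fun y hy => (h1 y hy).le
    · exact absurd (h1 x hx) (not_lt.2 hxc)
  -- powers
  have hpow_mem : ∀ u : Equiv.Perm ℝ, u ∈ H → ∀ n : ℕ, u ^ n ∈ H := fun u hu n => H.pow_mem hu n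
  have hzpow_mem : ∀ u : Equiv.Perm ℝ, u ∈ H → ∀ n : ℤ, u ^ n ∈ H := fun u hu n => H.zpow_mem hu n
  have hpow_succ_apply : ∀ (u : Equiv.Perm ℝ) (n : ℕ) (y : ℝ), (u ^ (n+1)) y = u ((u ^ n) y) := by
    intro u n y
    rw [pow_succ']
    rfl
  -- Archimedean property upward
  have harch_up : ∀ s ∈ H, (∀ y ∈ I, y < s y) → ∀ z ∈ I, ∃ n : ℕ, z < (s ^ n) x := by
    intro s hs hPos z hz
    by_contra hcon
    push_neg at hcon
    have hmem : ∀ n : ℕ, (s ^ n) x ∈ I := fun n => hmaps _ (hpow_mem s hs n) x hx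
    have hmono : Monotone (fun n : ℕ => (s ^ n) x) := by
      apply monotone_nat_of_le_succ
      intro n
      rw [hpow_succ_apply]
      exact (hPos _ (hmem n)).le
    have hbdd : BddAbove (Set.range fun n : ℕ => (s ^ n) x) :=
      ⟨b, by rintro w ⟨n, rfl⟩; exact (hmem n).2.le⟩
    have hlim := tendsto_atTop_ciSup hmono hbdd
    set L := ⨆ n : ℕ, (s ^ n) x with hLdef
    have hLz : L ≤ z := ciSup_le fun n => hcon n
    have hLa : a < L := lt_of_lt_of_le hx.1 (by simpa [hLdef] using le_ciSup hbdd 0)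
    have hLI : L ∈ I := ⟨hLa, lt_of_le_of_lt hLz hz.2⟩
    have hL01 : L ∈ Ioo (0:ℝ) 1 := ⟨lt_of_le_of_lt ha hLa, lt_of_lt_of_le hLI.2 hb⟩
    have hcont := (hH s hs).continuousAt hL01
    have h2 : Tendsto (fun n : ℕ => s ((s ^ n) x)) atTop (𝓝 (s L)) := hcont.tendsto.comp hlim
    have h3 : (fun n : ℕ => s ((s ^ n) x)) = fun n : ℕ => (s ^ (n+1)) x := by
      funext n; rw [hpow_succ_apply]
    rw [h3] at h2
    have h4 : Tendsto (fun n : ℕ => (s ^ (n+1)) x) atTop (𝓝 L) :=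
      hlim.comp (tendsto_add_atTop_nat 1)
    have h5 : s L = L := tendsto_nhds_unique h2 h4
    exact absurd (hPos L hLI) (by rw [h5]; exact lt_irrefl L)
  -- Archimedean property downward
  have harch_dn : ∀ s ∈ H, (∀ y ∈ I, y < s y) → ∀ z ∈ I, ∃ n : ℕ, (s⁻¹ ^ n) x < z := by
    intro s hs hPos z hz
    have hsinv : s⁻¹ ∈ H := H.inv_mem hs
    have hNeg : ∀ y ∈ I, s⁻¹ y < y := by
      intro y hy
      have h1 : s⁻¹ y ∈ I := hmaps _ hsinv y hy
      have h2 := hPos _ h1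
      rwa [Equiv.Perm.apply_inv_self] at h2
    by_contra hcon
    push_neg at hcon
    have hmem : ∀ n : ℕ, (s⁻¹ ^ n) x ∈ I := fun n => hmaps _ (hpow_mem _ hsinv n) x hx
    have hmono : Antitone (fun n : ℕ => (s⁻¹ ^ n) x) := by
      apply antitone_nat_of_succ_le
      intro n
      rw [hpow_succ_apply]
      exact (hNeg _ (hmem n)).le
    have hbdd : BddBelow (Set.range fun n : ℕ => (s⁻¹ ^ n) x) :=
      ⟨a, by rintro w ⟨n, rfl⟩; exact (hmem n).1.le⟩
    have hlim := tendsto_atTop_ciInf hmono hbdd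
    set L := ⨅ n : ℕ, (s⁻¹ ^ n) x with hLdef
    have hLz : z ≤ L := le_ciInf fun n => hcon n
    have hLb : L < b := lt_of_le_of_lt (by simpa [hLdef] using ciInf_le hbdd 0) hx.2
    have hLI : L ∈ I := ⟨lt_of_lt_of_le hz.1 hLz, hLb⟩
    have hL01 : L ∈ Ioo (0:ℝ) 1 := ⟨lt_of_le_of_lt ha hLI.1, lt_of_lt_of_le hLb hb⟩
    have hcont := (hH _ hsinv).continuousAt hL01
    have h2 : Tendsto (fun n : ℕ => s⁻¹ ((s⁻¹ ^ n) x)) atTop (𝓝 (s⁻¹ L)) := hcont.tendsto.comp hlim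
    have h3 : (fun n : ℕ => s⁻¹ ((s⁻¹ ^ n) x)) = fun n : ℕ => (s⁻¹ ^ (n+1)) x := by
      funext n; rw [hpow_succ_apply]
    rw [h3] at h2
    have h4 : Tendsto (fun n : ℕ => (s⁻¹ ^ (n+1)) x) atTop (𝓝 L) :=
      hlim.comp (tendsto_add_atTop_nat 1)
    have h5 : s⁻¹ L = L := tendsto_nhds_unique h2 h4
    exact absurd (hNeg L hLI) (by rw [h5]; exact lt_irrefl L)
  -- integer cut
  have hzmem_I : ∀ s ∈ H, ∀ n : ℤ, (s ^ n) x ∈ I := fun s hs n => hmaps _ (hzpow_mem s hs n) x hx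
  have hzcut : ∀ s ∈ H, (∀ y ∈ I, y < s y) → ∀ w ∈ H,
      ∃ n : ℤ, (s ^ n) x ≤ w x ∧ w x < (s ^ (n+1)) x := by
    intro s hs hPos w hw
    have hzsucc : ∀ n : ℤ, (s ^ n) x < (s ^ (n+1)) x := by
      intro n
      have h1 : (s ^ (n+1)) x = s ((s ^ n) x) := by
        rw [add_comm, zpow_add, zpow_one]; rfl
      rw [h1]
      exact hPos _ (hzmem_I s hs n)
    have hzlt : ∀ m n : ℤ, m < n → (s ^ m) x < (s ^ n) x := by
      intro m n hmn
      obtain ⟨k, hk⟩ : ∃ k : ℕ, n = m + (k+1) := by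
        refine ⟨(n - m - 1).toNat, ?_⟩
        have h0 : ((n - m - 1).toNat : ℤ) = n - m - 1 := Int.toNat_of_nonneg (by omega)
        omega
      subst hk
      clear hmn
      induction k with
      | zero => simpa using hzsucc m
      | succ k ih =>
        refine lt_trans ih ?_
        have h2 := hzsucc (m + (k+1))
        convert h2 using 3
        push_cast
        rfl
        push_cast
        ring
    have hinh : ∃ n : ℤ, (s ^ n) x ≤ w x := by
      obtain ⟨N, hN⟩ := harch_dn s hs hPos (w x) (hmaps w hw x hx)
      refine ⟨-(N:ℤ), ?_⟩
      have h1 : (s ^ (-(N:ℤ))) x = (s⁻¹ ^ N) x := by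
        rw [zpow_neg, zpow_natCast, inv_pow]
      rw [h1]
      exact hN.le
    have hbddz : ∃ B : ℤ, ∀ n : ℤ, (s ^ n) x ≤ w x → n ≤ B := by
      obtain ⟨N, hN⟩ := harch_up s hs hPos (w x) (hmaps w hw x hx)
      refine ⟨(N:ℤ), ?_⟩
      intro n hn
      by_contra hgt
      push_neg at hgt
      have h1 : (s ^ (N:ℤ)) x < (s ^ n) x := hzlt _ _ hgt
      rw [zpow_natCast] at h1
      linarith
    obtain ⟨n, hn, hgreat⟩ := Int.exists_greatest_of_bdd hbddz hinh
    refine ⟨n, hn, ?_⟩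
    by_contra hle
    push_neg at hle
    have := hgreat (n+1) hle
    omega
  -- inverse comparison
  have hinv_le : ∀ p ∈ H, ∀ w ∈ H, (∀ y ∈ I, p y ≤ w y) → ∀ y ∈ I, w⁻¹ y ≤ p⁻¹ y := by
    intro p hp w hw hle y hy
    have hz : w⁻¹ y ∈ I := hmaps _ (H.inv_mem hw) y hy
    have h1 : p (w⁻¹ y) ≤ w (w⁻¹ y) := hle _ hz
    rw [Equiv.Perm.apply_inv_self] at h1
    have h2 := (hH p hp).symm.strictMono.monotone h1
    have h3 : p⁻¹ (p (w⁻¹ y)) = w⁻¹ y := p.inv_apply_self _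
    calc w⁻¹ y = p⁻¹ (p (w⁻¹ y)) := h3.symm
    _ ≤ p⁻¹ y := h2
  -- commutators are never strictly positive on I
  have hnotpos : ∀ u ∈ H, ∀ v ∈ H, ¬ (∀ y ∈ I, y < ⁅u, v⁆ y) := by
    intro u hu v hv hPosC
    have hcdef : ⁅u, v⁆ = u * v * u⁻¹ * v⁻¹ := commutatorElement_def u v
    have happly : ∀ y : ℝ, ⁅u, v⁆ y = u (v (u⁻¹ (v⁻¹ y))) := by
      intro y; rw [hcdef]; rfl
    have hcH : ⁅u, v⁆ ∈ H := by
      rw [hcdef]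
      exact H.mul_mem (H.mul_mem (H.mul_mem hu hv) (H.inv_mem hu)) (H.inv_mem hv)
    by_cases hminex : ∃ s, s ∈ H ∧ (∀ y ∈ I, y < s y) ∧
        ∀ t ∈ H, (∀ y ∈ I, y < t y) → ¬ t x < s x
    · -- case of a minimal positive element: everything is a power of s on I
      obtain ⟨s, hs, hsPos, hsmin⟩ := hminex
      have hrep : ∀ w ∈ H, ∃ n : ℤ, ∀ y ∈ I, w y = (s ^ n) y := by
        intro w hw
        obtain ⟨n, hn1, hn2⟩ := hzcut s hs hsPos w hw
        have hsnH : s ^ n ∈ H := hzpow_mem s hs n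
        have htH : (s ^ n)⁻¹ * w ∈ H := H.mul_mem (H.inv_mem hsnH) hw
        have hsni := (hH _ (H.inv_mem hsnH)).strictMono
        have htx1 : x ≤ ((s ^ n)⁻¹ * w) x := by
          have h1 := hsni.monotone hn1
          rwa [Equiv.Perm.inv_apply_self] at h1
        have htx2 : ((s ^ n)⁻¹ * w) x < s x := by
          have h1 := hsni hn2
          have h3 : (s ^ n)⁻¹ * s ^ (n+1) = s := by group
          have h2 : (s ^ n)⁻¹ ((s ^ (n+1)) x) = s x := by
            calc (s ^ n)⁻¹ ((s ^ (n+1)) x) = ((s ^ n)⁻¹ * s ^ (n+1)) x := rfl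
            _ = s x := by rw [h3]
          rw [h2] at h1
          exact h1
        rcases htri _ htH with h1 | h1 | h1
        · refine ⟨n, fun y hy => ?_⟩
          have h2 : (s ^ n)⁻¹ (w y) = y := h1 y hy
          have h4 := congrArg (⇑(s ^ n)) h2
          rwa [Equiv.Perm.apply_inv_self] at h4
        · exact absurd (h1 x hx) (not_lt.2 htx1)
        · exact absurd htx2 (hsmin _ htH h1)
      have hinvrep : ∀ w ∈ H, ∀ k : ℤ, (∀ y ∈ I, w y = (s ^ k) y) →
          ∀ y ∈ I, w⁻¹ y = (s ^ (-k)) y := by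
        intro w hw k hwk y hy
        have hz : (s ^ (-k)) y ∈ I := hmaps _ (hzpow_mem s hs _) y hy
        have h1 : w ((s ^ (-k)) y) = (s ^ k) ((s ^ (-k)) y) := hwk _ hz
        have h2 : (s ^ k) ((s ^ (-k)) y) = y := by
          have h3 : (s ^ k) * (s ^ (-k)) = 1 := by group
          calc (s ^ k) ((s ^ (-k)) y) = ((s ^ k) * (s ^ (-k))) y := rfl
          _ = y := by rw [h3]; rfl
        rw [h2] at h1
        have h4 := congrArg (⇑w⁻¹) h1
        rw [Equiv.Perm.inv_apply_self] at h4
        exact h4.symm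
      obtain ⟨nu, hnu⟩ := hrep u hu
      obtain ⟨nv, hnv⟩ := hrep v hv
      have hx1 : v⁻¹ x ∈ I := hmaps _ (H.inv_mem hv) x hx
      have hx2 : u⁻¹ (v⁻¹ x) ∈ I := hmaps _ (H.inv_mem hu) _ hx1
      have hx3 : v (u⁻¹ (v⁻¹ x)) ∈ I := hmaps _ hv _ hx2
      have e1 : v⁻¹ x = (s ^ (-nv)) x := hinvrep v hv nv hnv x hx
      have e2 : u⁻¹ (v⁻¹ x) = (s ^ (-nu)) ((s ^ (-nv)) x) := by
        rw [hinvrep u hu nu hnu _ hx1, e1]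
      have e3 : v (u⁻¹ (v⁻¹ x)) = (s ^ nv) ((s ^ (-nu)) ((s ^ (-nv)) x)) := by
        rw [hnv _ hx2, e2]
      have e4 : ⁅u, v⁆ x = (s ^ nu) ((s ^ nv) ((s ^ (-nu)) ((s ^ (-nv)) x))) := by
        calc ⁅u, v⁆ x = u (v (u⁻¹ (v⁻¹ x))) := happly x
        _ = (s ^ nu) (v (u⁻¹ (v⁻¹ x))) := hnu _ hx3
        _ = (s ^ nu) ((s ^ nv) ((s ^ (-nu)) ((s ^ (-nv)) x))) := by rw [e3]
      have e5 : (s ^ nu) ((s ^ nv) ((s ^ (-nu)) ((s ^ (-nv)) x))) = x := by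
        have h3 : (s ^ nu) * (s ^ nv) * (s ^ (-nu)) * (s ^ (-nv)) = 1 := by group
        calc (s ^ nu) ((s ^ nv) ((s ^ (-nu)) ((s ^ (-nv)) x)))
            = ((s ^ nu) * (s ^ nv) * (s ^ (-nu)) * (s ^ (-nv))) x := rfl
        _ = x := by rw [h3]; rfl
      have h6 := hPosC x hx
      rw [e4, e5] at h6
      exact lt_irrefl x h6
    · -- no minimal positive element : halving is possible
      have hsmaller : ∀ s ∈ H, (∀ y ∈ I, y < s y) →
          ∃ t, t ∈ H ∧ (∀ y ∈ I, y < t y) ∧ t x < s x := by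
        intro s hs hsPos
        by_contra hcon2
        push_neg at hcon2
        exact hminex ⟨s, hs, hsPos, fun t ht htPos => not_lt.2 (hcon2 t ht htPos)⟩
      have hhalf : ∀ w ∈ H, (∀ y ∈ I, y < w y) →
          ∃ s, s ∈ H ∧ (∀ y ∈ I, y < s y) ∧ ∀ y ∈ I, s (s y) ≤ w y := by
        intro w hw hwPos
        obtain ⟨t, ht, htPos, htx⟩ := hsmaller w hw hwPos
        have hlt : ∀ y ∈ I, t y < w y := hat t ht w hw htx
        by_cases h2 : ∀ y ∈ I, t (t y) ≤ w y
        · exact ⟨t, ht, htPos, h2⟩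
        · push_neg at h2
          obtain ⟨y₁, hy₁, hy₁'⟩ := h2
          have httH : t * t ∈ H := H.mul_mem ht ht
          have hww : ∀ y ∈ I, w y < t (t y) := by
            rcases hpair w hw (t * t) httH with h3 | h3 | h3
            · exfalso
              have h4 : w y₁ = t (t y₁) := h3 y₁ hy₁
              rw [h4] at hy₁'
              exact lt_irrefl _ hy₁'
            · exact h3
            · exfalso
              have h4 : t (t y₁) < w y₁ := h3 y₁ hy₁
              exact absurd hy₁' (not_lt.2 h4.le)
          have hsH : t⁻¹ * w ∈ H := H.mul_mem (H.inv_mem ht) hw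
          have htinv := (hH _ (H.inv_mem ht)).strictMono
          have hsPos : ∀ y ∈ I, y < (t⁻¹ * w) y := by
            intro y hy
            have h4 := htinv (hlt y hy)
            rwa [Equiv.Perm.inv_apply_self] at h4
          refine ⟨t⁻¹ * w, hsH, hsPos, ?_⟩
          intro y hy
          have hzy : (t⁻¹ * w) y ∈ I := hmaps _ hsH y hy
          have h5 := hww _ hzy
          have h5' : w (t⁻¹ (w y)) < t (t (t⁻¹ (w y))) := h5
          rw [Equiv.Perm.apply_inv_self] at h5'
          have h6 := htinv h5'
          rw [Equiv.Perm.inv_apply_self] at h6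
          exact le_of_lt h6
      obtain ⟨s₁, hs₁, hs₁Pos, hs₁le⟩ := hhalf _ hcH hPosC
      obtain ⟨s₂, hs₂, hs₂Pos, hs₂le⟩ := hhalf _ hs₁ hs₁Pos
      have hz1 : s₂ x ∈ I := hmaps _ hs₂ x hx
      have hz2 : s₂ (s₂ x) ∈ I := hmaps _ hs₂ _ hz1
      have hs4 : ∀ y ∈ I, s₂ (s₂ (s₂ (s₂ y))) ≤ ⁅u, v⁆ y := by
        intro y hy
        have hy1 : s₂ y ∈ I := hmaps _ hs₂ y hy
        have hy2 : s₂ (s₂ y) ∈ I := hmaps _ hs₂ _ hy1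
        calc s₂ (s₂ (s₂ (s₂ y))) ≤ s₁ (s₂ (s₂ y)) := hs₂le _ hy2
        _ ≤ s₁ (s₁ y) := (hH s₁ hs₁).strictMono.monotone (hs₂le y hy)
        _ ≤ ⁅u, v⁆ y := hs₁le y hy
      obtain ⟨nu, hnu1, hnu2⟩ := hzcut s₂ hs₂ hs₂Pos u hu
      obtain ⟨nv, hnv1, hnv2⟩ := hzcut s₂ hs₂ hs₂Pos v hv
      have hu_up : ∀ y ∈ I, u y ≤ (s₂ ^ (nu+1)) y :=
        hatle u hu _ (hzpow_mem s₂ hs₂ _) hnu2.le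
      have hu_lo : ∀ y ∈ I, (s₂ ^ nu) y ≤ u y :=
        hatle _ (hzpow_mem s₂ hs₂ _) u hu hnu1
      have hv_up : ∀ y ∈ I, v y ≤ (s₂ ^ (nv+1)) y :=
        hatle v hv _ (hzpow_mem s₂ hs₂ _) hnv2.le
      have hv_lo : ∀ y ∈ I, (s₂ ^ nv) y ≤ v y :=
        hatle _ (hzpow_mem s₂ hs₂ _) v hv hnv1
      have hui : ∀ y ∈ I, u⁻¹ y ≤ (s₂ ^ nu)⁻¹ y :=
        hinv_le _ (hzpow_mem s₂ hs₂ _) u hu hu_lo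
      have hvi : ∀ y ∈ I, v⁻¹ y ≤ (s₂ ^ nv)⁻¹ y :=
        hinv_le _ (hzpow_mem s₂ hs₂ _) v hv hv_lo
      have hx1 : v⁻¹ x ∈ I := hmaps _ (H.inv_mem hv) x hx
      have hx2 : u⁻¹ (v⁻¹ x) ∈ I := hmaps _ (H.inv_mem hu) _ hx1
      have hx3 : v (u⁻¹ (v⁻¹ x)) ∈ I := hmaps _ hv _ hx2
      have mA := (hH _ (hzpow_mem s₂ hs₂ (nu+1))).strictMono.monotone
      have mB := (hH _ (hzpow_mem s₂ hs₂ (nv+1))).strictMono.monotone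
      have mC := (hH _ (H.inv_mem (hzpow_mem s₂ hs₂ nu))).strictMono.monotone
      have hchain : ⁅u, v⁆ x ≤
          ((s₂ ^ (nu+1)) * (s₂ ^ (nv+1)) * (s₂ ^ nu)⁻¹ * (s₂ ^ nv)⁻¹) x := by
        calc ⁅u, v⁆ x = u (v (u⁻¹ (v⁻¹ x))) := happly x
        _ ≤ (s₂ ^ (nu+1)) (v (u⁻¹ (v⁻¹ x))) := hu_up _ hx3
        _ ≤ (s₂ ^ (nu+1)) ((s₂ ^ (nv+1)) (u⁻¹ (v⁻¹ x))) := mA (hv_up _ hx2)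
        _ ≤ (s₂ ^ (nu+1)) ((s₂ ^ (nv+1)) ((s₂ ^ nu)⁻¹ (v⁻¹ x))) := mA (mB (hui _ hx1))
        _ ≤ (s₂ ^ (nu+1)) ((s₂ ^ (nv+1)) ((s₂ ^ nu)⁻¹ ((s₂ ^ nv)⁻¹ x))) :=
            mA (mB (mC (hvi x hx)))
        _ = ((s₂ ^ (nu+1)) * (s₂ ^ (nv+1)) * (s₂ ^ nu)⁻¹ * (s₂ ^ nv)⁻¹) x := rfl
      have hgrp : (s₂ ^ (nu+1)) * (s₂ ^ (nv+1)) * (s₂ ^ nu)⁻¹ * (s₂ ^ nv)⁻¹ = s₂ * s₂ := by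
        rw [← zpow_neg, ← zpow_neg, ← zpow_add, ← zpow_add, ← zpow_add]
        have he : nu + 1 + (nv + 1) + -nu + -nv = 1 + 1 := by ring
        rw [he, zpow_add, zpow_one]
      rw [hgrp] at hchain
      have h7 := hs4 x hx
      have h9 : (s₂ * s₂) x = s₂ (s₂ x) := rfl
      rw [h9] at hchain
      have hz3 : s₂ (s₂ (s₂ x)) ∈ I := hmaps _ hs₂ _ hz2
      have p1 := hs₂Pos _ hz2
      have p2 := hs₂Pos _ hz3
      linarith
  -- conclusion: every commutator is the identity on I
  intro u hu v hv
  have hcH : ⁅u, v⁆ ∈ H := by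
    rw [commutatorElement_def]
    exact H.mul_mem (H.mul_mem (H.mul_mem hu hv) (H.inv_mem hu)) (H.inv_mem hv)
  rcases htri _ hcH with h1 | h1 | h1
  · exact h1
  · exfalso
    apply hnotpos v hv u hu
    intro y hy
    have hinvc : ⁅v, u⁆ = ⁅u, v⁆⁻¹ := (commutatorElement_inv u v).symm
    rw [hinvc]
    have hz : ⁅u, v⁆⁻¹ y ∈ I := hmaps _ (H.inv_mem hcH) y hy
    have h2 := h1 _ hz
    rwa [Equiv.Perm.apply_inv_self] at h2
  · exact absurd h1 (hnotpos u hu v hv)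

end IsIcoDiff


/-- Corollary 2.10: if G and H are commuting nonabelian subgroups of Diff₊²([0,1)) and H
is perfect, then every element of H is the identity on the complement of Fix(G). -/
theorem perfect_commuting_trivial_off_fix (G H : Subgroup (Equiv.Perm ℝ))
    (hG : ∀ g ∈ G, IsIcoDiff 2 g) (hH : ∀ h ∈ H, IsIcoDiff 2 h)
    (hcomm : ∀ g ∈ G, ∀ h ∈ H, Commute g h)
    (hGna : ∃ g₁ ∈ G, ∃ g₂ ∈ G, ¬Commute g₁ g₂)
    (hHna : ∃ h₁ ∈ H, ∃ h₂ ∈ H, ¬Commute h₁ h₂)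
    (hperf : ⁅H, H⁆ = H) :
    ∀ h ∈ H, ∀ x ∈ Set.Ico (0:ℝ) 1, (∃ g ∈ G, g x ≠ x) → h x = x := by
  intro h hh x _ hex
  obtain ⟨g, hgG, hgx⟩ := hex
  have hgD := hG g hgG
  obtain ⟨a, b, ha, hb, hxab, hga, hgb, hcomp⟩ := hgD.component_structure hgx
  have hfree : ∀ y ∈ Set.Ioo a b, g y ≠ y := by
    intro y hy
    have h1 := connectedComponentIn_subset (IsIcoDiff.psupp g) x
    rw [hcomp] at h1
    exact h1 hy
  have hmaps : ∀ u ∈ H, ∀ y ∈ Set.Ioo a b, u y ∈ Set.Ioo a b := by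
    intro u hu y hy
    exact IsIcoDiff.stepA (hH u hu) hgD (hcomm g hgG u hu).symm hgx hcomp ha hb hxab
      hga hgb y hy
  have hcommutators := IsIcoDiff.holder_commutator H hH hgD
    (fun u hu => (hcomm g hgG u hu).symm) ha hb hxab hga hgb hfree hmaps
  set K : Subgroup (Equiv.Perm ℝ) :=
    { carrier := {u : Equiv.Perm ℝ | ∀ y ∈ Set.Ioo a b, u y = y}
      one_mem' := fun y _ => rfl
      mul_mem' := by
        intro p q hp hq y hy
        show p (q y) = y
        rw [hq y hy, hp y hy]
      inv_mem' := by
        intro p hp y hy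
        show p⁻¹ y = y
        have h1 := hp y hy
        calc p⁻¹ y = p⁻¹ (p y) := by rw [h1]
        _ = y := p.inv_apply_self y } with hK
  have hHK : H ≤ K := by
    conv_lhs => rw [← hperf]
    rw [Subgroup.commutator_le]
    intro p hp q hq
    show ∀ y ∈ Set.Ioo a b, ⁅p, q⁆ y = y
    exact hcommutators p hp q hq
  exact hHK hh x hxab
end

section
/- Let U and V be closed proper subsets of [0,1), each with nonempty interior complement in a way that the fixing subgroups G^U and G^V are nonabelian. Then the subgroup of Diff₊^r([0,1)) (r ≥ 2) generated by G^U and G^V has nonabelian centralizer if and only if U ∩ V contains a nonempty open set. -/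
open Set Metric

lemma exists_bump_perm (c ρ : ℝ) (hρ : 0 < ρ) :
    ∃ g : Equiv.Perm ℝ, ∃ ε : ℝ, 0 < ε ∧
      ContDiff ℝ (⊤ : ℕ∞) ⇑g ∧ (∀ y : ℝ, ContDiffAt ℝ (⊤ : ℕ∞) ⇑g.symm y) ∧
      StrictMono ⇑g ∧ (∀ z, z ∉ Set.Ioo (c - ρ) (c + ρ) → g z = z) ∧ g c = c + ε := by
  set φ : ContDiffBump c := ⟨ρ/2, ρ, by linarith, by linarith⟩ with hφ
  have hφsupp : Function.support ⇑φ = ball c ρ := φ.support_eq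
  have hφc : φ c = 1 := φ.one_of_mem_closedBall (by simp [hφ]; positivity)
  have hsmooth : ContDiff ℝ (⊤ : ℕ∞) ⇑φ := φ.contDiff
  have hdiff : Differentiable ℝ ⇑φ := hsmooth.differentiable (by simp)
  have hderiv_cont : Continuous (deriv ⇑φ) :=
    hsmooth.continuous_deriv (by exact_mod_cast le_top)
  have hcs : HasCompactSupport ⇑φ := φ.hasCompactSupport
  obtain ⟨M, hM⟩ := (hcs.deriv).exists_bound_of_continuous hderiv_cont
  set M' : ℝ := max M 1 with hM'
  have hM'pos : (0:ℝ) < M' := lt_of_lt_of_le one_pos (le_max_right _ _)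
  have hMle : ∀ x, |deriv ⇑φ x| ≤ M' := fun x =>
    le_trans (hM x) (le_max_left _ _)
  set ε : ℝ := 1 / (2 * M') with hε
  have hεpos : 0 < ε := by positivity
  have hεM : ε * M' = 1/2 := by rw [hε]; field_simp
  -- the function
  set g0 : ℝ → ℝ := fun x => x + ε * φ x with hg0
  have hg0smooth : ContDiff ℝ (⊤ : ℕ∞) g0 := contDiff_id.add (contDiff_const.mul hsmooth)
  -- Lipschitz bound on φ
  have hlip : ∀ x y : ℝ, |φ y - φ x| ≤ M' * |y - x| := by
    intro x y
    have := convex_univ.norm_image_sub_le_of_norm_deriv_le (f := ⇑φ)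
      (fun z _ => hdiff z) (fun z _ => hMle z) (mem_univ x) (mem_univ y)
    simpa [Real.norm_eq_abs] using this
  have hmono : StrictMono g0 := by
    intro x y hxy
    have h1 : |φ y - φ x| ≤ M' * (y - x) := by
      have := hlip x y; rwa [abs_of_pos (by linarith : (0:ℝ) < y - x)] at this
    have h2 : ε * (φ y - φ x) ≥ -(ε * (M' * (y - x))) := by
      have := neg_abs_le (φ y - φ x)
      nlinarith [hεpos.le, abs_nonneg (φ y - φ x)]
    have h3 : ε * (M' * (y - x)) = (1/2) * (y - x) := by
      rw [← mul_assoc, hεM]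
    simp only [hg0]
    nlinarith
  have hfix : ∀ z, z ∉ Set.Ioo (c - ρ) (c + ρ) → g0 z = z := by
    intro z hz
    have : φ z = 0 := by
      by_contra h
      have : z ∈ Function.support ⇑φ := h
      rw [hφsupp, mem_ball, Real.dist_eq, abs_lt] at this
      exact hz ⟨by linarith [this.1], by linarith [this.2]⟩
    simp [hg0, this]
  have hsurj : Function.Surjective g0 := by
    intro y
    rcases le_or_gt y (c - ρ) with h | h
    · exact ⟨y, hfix y (by intro hmem; exact absurd hmem.1 (not_lt.2 h))⟩
    rcases le_or_gt (c + ρ) y with h2 | h2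
    · exact ⟨y, hfix y (by intro hmem; exact absurd hmem.2 (not_lt.2 h2))⟩
    · have hL : g0 (c - ρ) = c - ρ := hfix _ (by simp)
      have hR : g0 (c + ρ) = c + ρ := hfix _ (by simp)
      have : y ∈ Icc (g0 (c - ρ)) (g0 (c + ρ)) := by
        rw [hL, hR]; exact ⟨h.le, h2.le⟩
      obtain ⟨x, _, hx⟩ := intermediate_value_Icc (by linarith : c - ρ ≤ c + ρ)
        (hg0smooth.continuous.continuousOn) this
      exact ⟨x, hx⟩
  have hbij : Function.Bijective g0 := ⟨hmono.injective, hsurj⟩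
  refine ⟨Equiv.ofBijective g0 hbij, ε, hεpos, hg0smooth, ?_, hmono, hfix, ?_⟩
  · -- inverse smooth
    intro y
    set G := Equiv.ofBijective g0 hbij with hG
    set x : ℝ := G.symm y with hx
    have hgx : g0 x = y := G.apply_symm_apply y
    have hd : HasDerivAt (⇑φ) (deriv ⇑φ x) x := (hdiff x).hasDerivAt
    set d : ℝ := 1 + ε * deriv ⇑φ x with hdd
    have hdpos : 0 < d := by
      have h1 := hMle x
      have := neg_abs_le (deriv ⇑φ x)
      nlinarith [hεpos.le]
    have hder : HasDerivAt g0 d x := by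
      exact (hasDerivAt_id' x).add ((hd.const_mul ε))
    have hfd : HasFDerivAt g0
        ((ContinuousLinearEquiv.unitsEquivAut ℝ (Units.mk0 d hdpos.ne')
          : ℝ ≃L[ℝ] ℝ) : ℝ →L[ℝ] ℝ) x := by
      have : ((ContinuousLinearEquiv.unitsEquivAut ℝ (Units.mk0 d hdpos.ne')
          : ℝ ≃L[ℝ] ℝ) : ℝ →L[ℝ] ℝ) = (1 : ℝ →L[ℝ] ℝ).smulRight d := by
        ext; simp [ContinuousLinearEquiv.unitsEquivAut_apply, mul_comm]
      rw [this]; exact hder.hasFDerivAt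
    have hca : ContDiffAt ℝ (⊤ : ℕ∞) g0 x := hg0smooth.contDiffAt
    have hn : ((⊤ : ℕ∞) : WithTop ℕ∞) ≠ 0 := by simp
    have hinv := hca.to_localInverse (f' := ContinuousLinearEquiv.unitsEquivAut ℝ
      (Units.mk0 d hdpos.ne')) hfd hn
    rw [hgx] at hinv
    apply hinv.congr_of_eventuallyEq
    have huniq := (hca.hasStrictFDerivAt' hfd hn).localInverse_unique
      (g := ⇑G.symm) (Filter.Eventually.of_forall fun z => G.symm_apply_apply z)
    rw [hgx] at huniq
    exact huniq
  · show g0 c = c + ε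
    simp [hg0, hφc]

lemma isIcoDiff_of (r : ℕ∞) (g : Equiv.Perm ℝ) (a b : ℝ) (ha : 0 ≤ a) (hb : b ≤ 1)
    (hg : ContDiff ℝ (⊤ : ℕ∞) ⇑g) (hgs : ∀ y : ℝ, ContDiffAt ℝ (⊤ : ℕ∞) ⇑g.symm y)
    (hm : StrictMono ⇑g) (hid : ∀ z, z ∉ Set.Ioo a b → g z = z) :
    IsIcoDiff r g := by
  have hsub : Ioo a b ⊆ Ico 0 1 := fun z hz => ⟨le_trans ha hz.1.le, lt_of_lt_of_le hz.2 hb⟩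
  have hmaps : ∀ x, x ∈ Ioo a b ↔ g x ∈ Ioo a b := by
    intro x
    constructor
    · intro hx
      have hga : g a = a := hid a (fun h => lt_irrefl a h.1)
      have hgb : g b = b := hid b (fun h => lt_irrefl b h.2)
      exact ⟨hga ▸ hm hx.1, hgb ▸ hm hx.2⟩
    · intro hx
      by_contra h
      rw [hid x h] at hx
      exact h hx
  refine ⟨(hg.of_le (by exact_mod_cast le_top)).contDiffOn, ?_, ⟨?_, ?_, ?_⟩, ?_, ?_⟩
  · intro y _
    exact ((hgs y).of_le (by exact_mod_cast le_top)).contDiffWithinAt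
  · intro x hx
    by_cases h : x ∈ Ioo a b
    · exact hsub ((hmaps x).1 h)
    · rw [hid x h]; exact hx
  · exact fun x _ y _ h => g.injective h
  · intro y hy
    refine ⟨g.symm y, ?_, g.apply_symm_apply y⟩
    by_cases h : g.symm y ∈ Ioo a b
    · exact hsub h
    · have h2 : g (g.symm y) = g.symm y := hid _ h
      rw [g.apply_symm_apply] at h2
      rwa [← h2]
  · exact fun x _ y _ h => hm h
  · intro x hx
    exact hid x (fun h => hx (hsub h))

lemma isIcoDiff_fix_zero {r : ℕ∞} {h : Equiv.Perm ℝ} (hh : IsIcoDiff r h) : h 0 = 0 := by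
  obtain ⟨-, -, hbij, hmono, -⟩ := hh
  have h0 : (0:ℝ) ∈ Ico (0:ℝ) 1 := ⟨le_refl _, one_pos⟩
  have hmem := hbij.mapsTo h0
  rcases eq_or_lt_of_le hmem.1 with heq | hlt
  · exact heq.symm
  · obtain ⟨y, hy, hgy⟩ := hbij.surjOn h0
    rcases eq_or_lt_of_le hy.1 with heq | hlt'
    · rw [← heq] at hgy; exact hgy
    · exfalso
      have := hmono h0 hy hlt'
      rw [hgy] at this
      exact absurd (lt_trans hlt this) (lt_irrefl 0)

lemma commute_of_fix_of_supp (g h : Equiv.Perm ℝ) (a b : ℝ)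
    (hgfix : ∀ z ∈ Set.Ioo a b, g z = z) (hh : ∀ z, z ∉ Set.Ioo a b → h z = z) :
    Commute g h := by
  have key : ∀ (k : Equiv.Perm ℝ), (∀ z ∈ Set.Ioo a b, k z = z) →
      ∀ x, x ∈ Ioo a b ↔ k x ∈ Ioo a b := by
    intro k hk x
    constructor
    · intro hx; rw [hk x hx]; exact hx
    · intro hx
      have h2 := hk _ hx
      have h3 := k.injective h2
      rwa [h3] at hx
  have key2 : ∀ x, x ∈ Ioo a b → h x ∈ Ioo a b := by
    intro x hx
    by_contra hc
    have h2 : h (h x) = h x := hh _ hc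
    have h3 := h.injective h2
    rw [h3] at hc
    exact hc hx
  have keyg := key g hgfix
  have : ∀ x, g (h x) = h (g x) := by
    intro x
    by_cases hx : x ∈ Ioo a b
    · rw [hgfix x hx, hgfix _ (key2 x hx)]
    · rw [hh x hx]
      have hgx : g x ∉ Ioo a b := fun hc => hx ((keyg x).2 hc)
      rw [hh _ hgx]
  exact Equiv.ext fun x => by
    simp only [Equiv.Perm.mul_apply]
    exact this x

lemma moved_mem (r : ℕ∞) (U : Set ℝ)
    (hUcl : ∀ x ∈ Set.Ico (0:ℝ) 1, x ∈ closure U → x ∈ U)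
    (h : Equiv.Perm ℝ) (hh : IsIcoDiff r h)
    (hcomm : ∀ g : Equiv.Perm ℝ, IsIcoDiff r g → (∀ x ∈ U, g x = x) → Commute g h)
    (x : ℝ) (hx : h x ≠ x) : x ∈ U ∧ x ∈ Ioo 0 1 := by
  have hIco : x ∈ Ico (0:ℝ) 1 := by
    by_contra hc
    exact hx (hh.2.2.2.2 x hc)
  have hx0 : x ≠ 0 := by
    intro h0
    rw [h0] at hx
    exact hx (isIcoDiff_fix_zero hh)
  have hxIoo : x ∈ Ioo (0:ℝ) 1 := ⟨lt_of_le_of_ne hIco.1 (Ne.symm hx0), hIco.2⟩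
  refine ⟨?_, hxIoo⟩
  by_contra hxU
  have hxcl : x ∉ closure U := fun hc => hxU (hUcl x hIco hc)
  obtain ⟨ρ₀, hρ₀, hball⟩ := Metric.isOpen_iff.1 isClosed_closure.isOpen_compl x hxcl
  set D : ℝ := |h x - x| with hD
  have hDpos : 0 < D := abs_pos.2 (sub_ne_zero.2 hx)
  set ρ : ℝ := min (min (ρ₀/2) (D/2)) (min (x/2) ((1-x)/2)) with hρdef
  have hρpos : 0 < ρ := by
    have h1 := hxIoo.1; have h2 := hxIoo.2
    exact lt_min (lt_min (by linarith) (by linarith)) (lt_min (by linarith) (by linarith))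
  have hρ1 : ρ ≤ ρ₀/2 := le_trans (min_le_left _ _) (min_le_left _ _)
  have hρ2 : ρ ≤ D/2 := le_trans (min_le_left _ _) (min_le_right _ _)
  have hρ3 : ρ ≤ x/2 := le_trans (min_le_right _ _) (min_le_left _ _)
  have hρ4 : ρ ≤ (1-x)/2 := le_trans (min_le_right _ _) (min_le_right _ _)
  obtain ⟨g, ε, hε, hsm, hsy, hmono, hfix, hval⟩ := exists_bump_perm x ρ hρpos
  have hgIco : IsIcoDiff r g :=
    isIcoDiff_of r g (x - ρ) (x + ρ) (by linarith) (by linarith) hsm hsy hmono hfix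
  have hgU : ∀ u ∈ U, g u = u := by
    intro u hu
    apply hfix
    intro hmem
    have humem : u ∈ ball x ρ₀ := by
      rw [mem_ball, Real.dist_eq]
      have h1 := hmem.1; have h2 := hmem.2
      rw [abs_lt]; constructor <;> linarith
    exact (hball humem) (subset_closure hu)
  have hcom := hcomm g hgIco hgU
  have happ : g (h x) = h (g x) := by
    have := DFunLike.congr_fun hcom x
    simpa [Equiv.Perm.mul_apply] using this
  have hhx : g (h x) = h x := by
    apply hfix
    intro hmem
    have : |h x - x| < ρ := by
      rw [abs_lt]; exact ⟨by linarith [hmem.1], by linarith [hmem.2]⟩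
    rw [← hD] at this
    linarith
  rw [hhx] at happ
  have := h.injective happ
  rw [hval] at this
  linarith [this]

/-- Corollary 3.6: for closed proper subsets U, V of [0,1) whose fixing subgroups are
nonabelian, the subgroup generated by G^U and G^V has nonabelian centralizer iff
U ∩ V contains a nonempty open set. -/
theorem generated_fixing_subgroups_centralizer (r : ℕ∞) (hr : 2 ≤ r) (U V : Set ℝ)
    (hU : U ⊆ Set.Ico 0 1) (hV : V ⊆ Set.Ico 0 1)
    (hUcl : ∀ x ∈ Set.Ico (0:ℝ) 1, x ∈ closure U → x ∈ U)
    (hVcl : ∀ x ∈ Set.Ico (0:ℝ) 1, x ∈ closure V → x ∈ V)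
    (hUne : U ≠ Set.Ico 0 1) (hVne : V ≠ Set.Ico 0 1)
    (hGUna : ∃ g₁ g₂ : Equiv.Perm ℝ,
      (IsIcoDiff r g₁ ∧ ∀ x ∈ U, g₁ x = x) ∧
      (IsIcoDiff r g₂ ∧ ∀ x ∈ U, g₂ x = x) ∧ ¬Commute g₁ g₂)
    (hGVna : ∃ g₁ g₂ : Equiv.Perm ℝ,
      (IsIcoDiff r g₁ ∧ ∀ x ∈ V, g₁ x = x) ∧
      (IsIcoDiff r g₂ ∧ ∀ x ∈ V, g₂ x = x) ∧ ¬Commute g₁ g₂) :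
    (∃ h₁ h₂ : Equiv.Perm ℝ, IsIcoDiff r h₁ ∧ IsIcoDiff r h₂ ∧
      (∀ k ∈ Subgroup.closure
          ({g : Equiv.Perm ℝ | IsIcoDiff r g ∧ ∀ x ∈ U, g x = x} ∪
           {g : Equiv.Perm ℝ | IsIcoDiff r g ∧ ∀ x ∈ V, g x = x}),
        Commute k h₁ ∧ Commute k h₂) ∧
      ¬Commute h₁ h₂) ↔
    ∃ a b : ℝ, a < b ∧ Set.Ioo a b ⊆ U ∩ V := by
  set S : Set (Equiv.Perm ℝ) :=
    {g : Equiv.Perm ℝ | IsIcoDiff r g ∧ ∀ x ∈ U, g x = x} ∪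
    {g : Equiv.Perm ℝ | IsIcoDiff r g ∧ ∀ x ∈ V, g x = x} with hS
  constructor
  · rintro ⟨h₁, h₂, hh₁, hh₂, hcen, hnc⟩
    -- every point moved by h₁ or h₂ lies in U ∩ V ∩ (0,1)
    have key : ∀ h : Equiv.Perm ℝ, IsIcoDiff r h →
        (∀ k ∈ Subgroup.closure S, Commute k h) →
        ∀ z : ℝ, h z ≠ z → (z ∈ U ∩ V ∧ z ∈ Ioo 0 1) := by
      intro h hhI hcomm z hz
      have hcU : ∀ g : Equiv.Perm ℝ, IsIcoDiff r g → (∀ x ∈ U, g x = x) → Commute g h := by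
        intro g hgI hgf
        exact hcomm g (Subgroup.subset_closure (Or.inl ⟨hgI, hgf⟩))
      have hcV : ∀ g : Equiv.Perm ℝ, IsIcoDiff r g → (∀ x ∈ V, g x = x) → Commute g h := by
        intro g hgI hgf
        exact hcomm g (Subgroup.subset_closure (Or.inr ⟨hgI, hgf⟩))
      obtain ⟨hzU, hzI⟩ := moved_mem r U hUcl h hhI hcU z hz
      obtain ⟨hzV, -⟩ := moved_mem r V hVcl h hhI hcV z hz
      exact ⟨⟨hzU, hzV⟩, hzI⟩
    have key2 : ∀ h : Equiv.Perm ℝ, IsIcoDiff r h →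
        (∀ k ∈ Subgroup.closure S, Commute k h) →
        ∀ y : ℝ, h y ≠ y → ∃ a b : ℝ, a < b ∧ Set.Ioo a b ⊆ U ∩ V := by
      intro h hhI hcomm y hy
      obtain ⟨-, hyI⟩ := key h hhI hcomm y hy
      have hcont : ContinuousAt (⇑h) y := by
        apply hhI.1.continuousOn.continuousAt
        exact Ico_mem_nhds (by exact_mod_cast hyI.1) hyI.2
      have hsub : ContinuousAt (fun z => h z - z) y := hcont.sub continuousAt_id
      have hne : (fun z => h z - z) y ≠ 0 := sub_ne_zero.2 hy
      have hev1 : ∀ᶠ z in nhds y, h z - z ≠ 0 := hsub.eventually_ne hne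
      have hev2 : ∀ᶠ z in nhds y, z ∈ U ∩ V := by
        filter_upwards [hev1] with z h1
        exact (key h hhI hcomm z (sub_ne_zero.1 h1)).1
      obtain ⟨δ, hδ, hball⟩ := Metric.eventually_nhds_iff_ball.1 hev2
      refine ⟨y - δ, y + δ, by linarith, ?_⟩
      intro z hz
      apply hball
      rw [← Real.ball_eq_Ioo] at hz
      exact hz
    -- find a moved point
    have : ¬ ∀ y : ℝ, h₁ (h₂ y) = h₂ (h₁ y) := by
      intro hall
      apply hnc
      exact Equiv.ext fun y => by
        simpa [Equiv.Perm.mul_apply] using hall y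
    push_neg at this
    obtain ⟨y, hy⟩ := this
    have hcomm1 : ∀ k ∈ Subgroup.closure S, Commute k h₁ := fun k hk => (hcen k hk).1
    have hcomm2 : ∀ k ∈ Subgroup.closure S, Commute k h₂ := fun k hk => (hcen k hk).2
    by_cases e1 : h₁ y = y
    · by_cases e2 : h₂ y = y
      · exact absurd (by simp [e1, e2]) hy
      · exact key2 h₂ hh₂ hcomm2 y e2
    · exact key2 h₁ hh₁ hcomm1 y e1
  · rintro ⟨a, b, hab, hsub⟩
    have hsubIco : Ioo a b ⊆ Ico (0:ℝ) 1 := fun z hz => hU (hsub hz).1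
    have ha0 : (0:ℝ) ≤ a := by
      by_contra hc
      push_neg at hc
      have h1 : a < min b 0 := lt_min hab hc
      have h2 : (a + min b 0)/2 ∈ Ioo a b :=
        ⟨by linarith, by have := min_le_left b 0; linarith⟩
      have h3 := (hsubIco h2).1
      have := min_le_right b 0
      linarith
    have hb1 : b ≤ 1 := by
      by_contra hc
      push_neg at hc
      have h1 : max a 1 < b := max_lt hab hc
      have h2 : (max a 1 + b)/2 ∈ Ioo a b :=
        ⟨by have := le_max_left a 1; linarith, by linarith⟩
      have h3 := (hsubIco h2).2
      have := le_max_right a 1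
      linarith
    set m : ℝ := (a + b)/2 with hm
    set ρ : ℝ := (b - a)/4 with hρ
    have hρpos : 0 < ρ := by linarith
    obtain ⟨h₂, ε₂, hε₂, hsm₂, hsy₂, hmono₂, hfix₂, hval₂⟩ := exists_bump_perm m ρ hρpos
    have hmsub : Ioo (m - ρ) (m + ρ) ⊆ Ioo a b := by
      intro z hz
      exact ⟨by linarith [hz.1], by linarith [hz.2]⟩
    set q : ℝ := m + ε₂ with hq
    have hqgt : m < q := by linarith
    have hqlt : q < m + ρ := by
      have h1 : h₂ (m + ρ) = m + ρ := hfix₂ _ (fun hmem => lt_irrefl _ hmem.2)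
      have h2 : h₂ m < h₂ (m + ρ) := hmono₂ (by linarith)
      rw [hval₂, h1] at h2
      rw [hq]; linarith
    set ρ₁ : ℝ := min (q - m) ((m + ρ) - q) / 2 with hρ₁
    have hρ₁pos : 0 < ρ₁ := by
      rw [hρ₁]
      have : 0 < min (q - m) ((m + ρ) - q) := lt_min (by linarith) (by linarith)
      linarith
    have hρ₁a : ρ₁ ≤ (q - m)/2 := by
      rw [hρ₁]; have := min_le_left (q - m) ((m + ρ) - q); linarith
    have hρ₁b : ρ₁ ≤ ((m + ρ) - q)/2 := by
      rw [hρ₁]; have := min_le_right (q - m) ((m + ρ) - q); linarith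
    obtain ⟨h₁, ε₁, hε₁, hsm₁, hsy₁, hmono₁, hfix₁, hval₁⟩ := exists_bump_perm q ρ₁ hρ₁pos
    have h1sub : Ioo (q - ρ₁) (q + ρ₁) ⊆ Ioo a b := by
      intro z hz
      refine hmsub ⟨?_, ?_⟩
      · have := hz.1; linarith
      · have := hz.2; linarith
    -- IsIcoDiff
    have hma : a ≤ m - ρ := by linarith
    have hmb : m + ρ ≤ b := by linarith
    have hIco₂ : IsIcoDiff r h₂ :=
      isIcoDiff_of r h₂ (m - ρ) (m + ρ) (by linarith) (by linarith) hsm₂ hsy₂ hmono₂ hfix₂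
    have hIco₁ : IsIcoDiff r h₁ :=
      isIcoDiff_of r h₁ (q - ρ₁) (q + ρ₁) (by linarith) (by linarith) hsm₁ hsy₁ hmono₁ hfix₁
    refine ⟨h₁, h₂, hIco₁, hIco₂, ?_, ?_⟩
    · -- centralizing
      have hfix₁' : ∀ z, z ∉ Ioo a b → h₁ z = z := fun z hz =>
        hfix₁ z (fun hmem => hz (h1sub hmem))
      have hfix₂' : ∀ z, z ∉ Ioo a b → h₂ z = z := fun z hz =>
        hfix₂ z (fun hmem => hz (hmsub hmem))
      have hle : Subgroup.closure S ≤ Subgroup.centralizer {h₁, h₂} := by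
        rw [Subgroup.closure_le]
        intro g hg
        rw [SetLike.mem_coe, Subgroup.mem_centralizer_iff]
        have hgfix : ∀ z ∈ Ioo a b, g z = z := by
          rcases hg with ⟨-, hgf⟩ | ⟨-, hgf⟩
          · exact fun z hz => hgf z (hsub hz).1
          · exact fun z hz => hgf z (hsub hz).2
        rintro t (rfl | rfl)
        · exact (commute_of_fix_of_supp g t a b hgfix hfix₁').symm
        · exact (commute_of_fix_of_supp g t a b hgfix hfix₂').symm
      intro k hk
      have hkmem := hle hk
      rw [Subgroup.mem_centralizer_iff] at hkmem
      exact ⟨(hkmem h₁ (Or.inl rfl)).symm, (hkmem h₂ (Or.inr rfl)).symm⟩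
    · -- not commuting
      intro hc
      have happ := DFunLike.congr_fun hc m
      simp only [Equiv.Perm.mul_apply] at happ
      have hm₁ : h₁ m = m := by
        apply hfix₁
        intro hmem
        have := hmem.1
        linarith
      rw [hval₂, hm₁, hval₂, hval₁] at happ
      linarith [happ]
end
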